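/- arXiv:0810.5605 — 12 statements merged into one kernel-verified Lean document; each statement's English description precedes it below -/
import Mathlib

section
/- Let n be a positive integer that is not divisible by 3, and let c : ZMod n → ℝ satisfy c i ≠ 0 for all i. Then there exists a unique function t : ZMod n → ℝ such that t i * t (i+1) * t (i+2) = c i for every i ∈ ZMod n. (This is the key step of Proposition 4.1: when n is not a multiple of 3, every twisted n-gon admits a unique lift to ℝ³ with unit Wronskian, identifying the space of twisted n-gons with the space of difference equations V_{i+3} = a_i V_{i+2} + b_i V_{i+1} + V_i.) -/
private lemma cube_surj (x : ℝ) : ∃ y : ℝ, y ^ 3 = x := by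
  rcases le_or_gt 0 x with hx | hx
  · exact ⟨x ^ ((3 : ℕ)⁻¹ : ℝ), Real.rpow_inv_natCast_pow hx (by norm_num)⟩
  · refine ⟨-((-x) ^ ((3 : ℕ)⁻¹ : ℝ)), ?_⟩
    rw [Odd.neg_pow (by decide), Real.rpow_inv_natCast_pow (by linarith) (by norm_num),
      neg_neg]

private lemma cube_inj {x y : ℝ} (h : x ^ 3 = y ^ 3) : x = y :=
  (Odd.strictMono_pow (R := ℝ) (by decide)).injective h

set_option maxHeartbeats 1000000 in
/-- Proposition 4.1 (key step): if `n` is a positive integer not divisible by 3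
and `c i ≠ 0` for all `i : ZMod n`, there is a unique `t : ZMod n → ℝ` with
`t i * t (i+1) * t (i+2) = c i` for all `i`. -/
theorem stmt_0 (n : ℕ) (hn : 0 < n) (h3 : ¬ (3 ∣ n)) (c : ZMod n → ℝ)
    (hc : ∀ i, c i ≠ 0) :
    ∃! t : ZMod n → ℝ, ∀ i, t i * t (i + 1) * t (i + 2) = c i := by
  haveI : NeZero n := ⟨hn.ne'⟩
  have hn3 : n % 3 = 1 ∨ n % 3 = 2 := by
    have h0 : n % 3 < 3 := Nat.mod_lt n (by norm_num)
    have h1 : n % 3 ≠ 0 := fun h => h3 (Nat.dvd_of_mod_eq_zero h)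
    omega
  -- generic val-of-add lemma
  have hvadd : ∀ (i : ZMod n) (k : ℕ), (i + (k : ZMod n)).val = (i.val + k) % n := by
    intro i k
    rw [ZMod.val_add, ZMod.val_natCast]
    conv_rhs => rw [Nat.add_mod]
    rw [Nat.mod_eq_of_lt (ZMod.val_lt i)]
  have h1 : ∀ i : ZMod n, (i + 1).val = if i.val + 1 = n then 0 else i.val + 1 := by
    intro i
    have hv : i.val < n := ZMod.val_lt i
    rw [show (1 : ZMod n) = ((1 : ℕ) : ZMod n) by norm_cast, hvadd]
    split_ifs with h
    · rw [h, Nat.mod_self]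
    · exact Nat.mod_eq_of_lt (by omega)
  have h2 : ∀ i : ZMod n, (i + 2).val =
      if i.val + 2 = n then 0 else if i.val + 1 = n then (if n = 1 then 0 else 1)
      else i.val + 2 := by
    intro i
    have hv : i.val < n := ZMod.val_lt i
    rw [show (2 : ZMod n) = ((2 : ℕ) : ZMod n) by norm_cast, hvadd]
    split_ifs with hA hB hC
    · rw [hA, Nat.mod_self]
    · subst hC
      omega
    · rw [show i.val + 2 = n + 1 by omega, Nat.add_mod_left]
      exact Nat.mod_eq_of_lt (by omega)
    · exact Nat.mod_eq_of_lt (by omega)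
  -- the magic exponent function
  obtain ⟨a, ha⟩ : ∃ a : ZMod n → ℤ, ∀ i : ZMod n,
      a i + a (i + 1) + a (i + 2) = if i = -1 then 3 else 0 := by
    refine ⟨fun j =>
      if n % 3 = 1 then
        (if j.val % 3 = 0 then 1 else if j.val % 3 = 1 then 1 else -2)
      else
        (if j.val % 3 = 0 then -1 else if j.val % 3 = 1 then 2 else -1), ?_⟩
    intro i
    have hv : i.val < n := ZMod.val_lt i
    have hiff : (i = -1) ↔ (i.val + 1 = n) := by
      have e : i = -1 ↔ i + 1 = 0 :=
        ⟨by rintro rfl; ring, fun h => eq_neg_of_add_eq_zero_left h⟩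
      rw [e, ← ZMod.val_eq_zero, h1 i]
      split_ifs with h
      · simpa using h
      · simpa using h
    simp only [hiff, h1 i, h2 i]
    have hmod : n % 3 = 1 ∨ n % 3 = 2 := hn3
    split_ifs <;> first | omega | (exfalso; exact ‹False›)
  -- key product computation
  have key : ∀ f : ZMod n → ℝ, (∀ j, f j ≠ 0) → ∀ k : ZMod n,
      (∏ j : ZMod n, f (k - 1 - j) ^ (a j)) *
      (∏ j : ZMod n, f (k - j) ^ (a j)) *
      (∏ j : ZMod n, f (k + 1 - j) ^ (a j)) = f k ^ 3 := by
    intro f hf k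
    have e1 : (∏ j : ZMod n, f (k - j) ^ (a j)) =
        ∏ j : ZMod n, f (k - 1 - j) ^ (a (j + 1)) := by
      refine (Fintype.prod_equiv (Equiv.addRight (1 : ZMod n))
        (fun x => f (k - 1 - x) ^ (a (x + 1))) (fun j => f (k - j) ^ (a j)) ?_).symm
      intro x
      show f (k - 1 - x) ^ (a (x + 1)) = f (k - (x + 1)) ^ (a (x + 1))
      rw [show k - 1 - x = k - (x + 1) by ring]
    have e2 : (∏ j : ZMod n, f (k + 1 - j) ^ (a j)) =
        ∏ j : ZMod n, f (k - 1 - j) ^ (a (j + 2)) := by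
      refine (Fintype.prod_equiv (Equiv.addRight (2 : ZMod n))
        (fun x => f (k - 1 - x) ^ (a (x + 2))) (fun j => f (k + 1 - j) ^ (a j)) ?_).symm
      intro x
      show f (k - 1 - x) ^ (a (x + 2)) = f (k + 1 - (x + 2)) ^ (a (x + 2))
      rw [show k - 1 - x = k + 1 - (x + 2) by ring]
    rw [e1, e2, ← Finset.prod_mul_distrib, ← Finset.prod_mul_distrib]
    have : ∀ j : ZMod n, f (k - 1 - j) ^ (a j) * f (k - 1 - j) ^ (a (j + 1)) *
        f (k - 1 - j) ^ (a (j + 2)) = if j = -1 then f (k - 1 - j) ^ (3 : ℕ) else 1 := by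
      intro j
      rw [← zpow_add₀ (hf _), ← zpow_add₀ (hf _), ha j]
      split_ifs
      · norm_cast
      · exact zpow_zero _
    rw [Finset.prod_congr rfl (fun j _ => this j), Fintype.prod_ite_eq' (-1 : ZMod n)
      (fun j => f (k - 1 - j) ^ (3 : ℕ)), show k - 1 - (-1 : ZMod n) = k by ring]
  -- nonvanishing of any solution
  have tnz : ∀ t : ZMod n → ℝ, (∀ i, t i * t (i + 1) * t (i + 2) = c i) →
      ∀ i, t i ≠ 0 := by
    intro t ht i hzero
    exact hc i (by rw [← ht i, hzero, zero_mul, zero_mul])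
  -- the cube of any solution is determined
  have tcube : ∀ t : ZMod n → ℝ, (∀ i, t i * t (i + 1) * t (i + 2) = c i) →
      ∀ k : ZMod n, t k ^ 3 = ∏ j : ZMod n, c (k - 1 - j) ^ (a j) := by
    intro t ht k
    have : ∀ j : ZMod n, c (k - 1 - j) ^ (a j) =
        t (k - 1 - j) ^ (a j) * t (k - j) ^ (a j) * t (k + 1 - j) ^ (a j) := by
      intro j
      rw [← mul_zpow, ← mul_zpow, show k - j = k - 1 - j + 1 by ring,
        show k + 1 - j = k - 1 - j + 2 by ring, ht (k - 1 - j)]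
    rw [Finset.prod_congr rfl (fun j _ => this j), Finset.prod_mul_distrib,
      Finset.prod_mul_distrib, key t (tnz t ht) k]
  -- construct the solution
  set Q : ZMod n → ℝ := fun k => ∏ j : ZMod n, c (k - 1 - j) ^ (a j) with hQdef
  have hQ : ∀ k : ZMod n, Q k * Q (k + 1) * Q (k + 2) = c k ^ 3 := by
    intro k
    have eq1 : Q (k + 1) = ∏ j : ZMod n, c (k - j) ^ (a j) :=
      Finset.prod_congr rfl (fun j _ => by rw [show k + 1 - 1 - j = k - j by ring])
    have eq2 : Q (k + 2) = ∏ j : ZMod n, c (k + 1 - j) ^ (a j) :=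
      Finset.prod_congr rfl (fun j _ => by rw [show k + 2 - 1 - j = k + 1 - j by ring])
    rw [eq1, eq2]
    exact key c hc k
  choose r hr using cube_surj
  refine ⟨fun k => r (Q k), ?_, ?_⟩
  · intro i
    apply cube_inj
    rw [mul_pow, mul_pow, hr, hr, hr, hQ i]
  · intro t ht
    funext k
    apply cube_inj
    rw [hr, tcube t ht k]
end

section
/- The pentagram map commutes with the rescaling operation: for every real t ≠ 0 and every (x, y) with all denominators nonvanishing, the pentagram map in corner coordinates applied to the rescaled point (t·x_i, t⁻¹·y_i) equals the rescaling of the image; that is, for all i ∈ ZMod n, T*x_i computed from (t·x, t⁻¹·y) equals t·(T*x_i computed from (x, y)), and T*y_i computed from (t·x, t⁻¹·y) equals t⁻¹·(T*y_i computed from (x, y)). -/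
/-- The pentagram map in corner coordinates: `T*x_i`. -/
noncomputable def pentX {n : ℕ} (x y : ZMod n → ℝ) (i : ZMod n) : ℝ :=
  x i * (1 - x (i - 1) * y (i - 1)) / (1 - x (i + 1) * y (i + 1))

/-- The pentagram map in corner coordinates: `T*y_i`. -/
noncomputable def pentY {n : ℕ} (x y : ZMod n → ℝ) (i : ZMod n) : ℝ :=
  y (i + 1) * (1 - x (i + 2) * y (i + 2)) / (1 - x i * y i)

/-- Corollary 2.3: the pentagram map commutes with the rescaling operation
`R_t : (x_i, y_i) ↦ (t x_i, t⁻¹ y_i)`. -/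
theorem stmt_1 (n : ℕ) (hn : 4 ≤ n) (x y : ZMod n → ℝ)
    (hxy : ∀ i, 1 - x i * y i ≠ 0) (t : ℝ) (ht : t ≠ 0) :
    ∀ i : ZMod n,
      pentX (fun j => t * x j) (fun j => t⁻¹ * y j) i = t * pentX x y i ∧
      pentY (fun j => t * x j) (fun j => t⁻¹ * y j) i = t⁻¹ * pentY x y i := by
  intro i
  have key : ∀ j : ZMod n, t * x j * (t⁻¹ * y j) = x j * y j := by
    intro j; field_simp
  constructor
  · simp only [pentX, key]; ring
  · simp only [pentY, key]
    rw [mul_div_assoc, mul_div_assoc]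
    ring
end

section
/- Let n be even. Then the functions O_{n/2} = ∏_{i even} x_i + ∏_{i odd} x_i and E_{n/2} = ∏_{i even} y_i + ∏_{i odd} y_i are invariant under the pentagram map: for every (x, y) with 1 − x_i y_i ≠ 0 for all i, evaluating O_{n/2} and E_{n/2} at (T*x, T*y) gives the same values as at (x, y). -/
open Finset

private lemma even_mod_iff {a n : ℕ} (hn : Even n) : Even (a % n) ↔ Even a := by
  conv_rhs => rw [← Nat.div_add_mod a n]
  rw [Nat.even_add]
  simp [Nat.even_mul, hn]

private lemma parity_succ {n : ℕ} [NeZero n] (hn1 : 1 < n) (hne : Even n) (i : ZMod n) :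
    Even ((i + 1).val) ↔ ¬ Even i.val := by
  have : Fact (1 < n) := ⟨hn1⟩
  rw [ZMod.val_add, ZMod.val_one, even_mod_iff hne, Nat.even_add_one]

private lemma prod_shift {n : ℕ} [NeZero n] (g : ZMod n → ℝ) (p q : ZMod n → Prop)
    [DecidablePred p] [DecidablePred q] (h : ∀ i, p i ↔ q (i + 1)) :
    ∏ i ∈ univ.filter p, g (i + 1) = ∏ j ∈ univ.filter q, g j := by
  refine Finset.prod_nbij' (fun i => i + 1) (fun j => j - 1) ?_ ?_ ?_ ?_ ?_
  · intro i hi; simp only [mem_filter, mem_univ, true_and] at hi ⊢; exact (h i).1 hi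
  · intro j hj; simp only [mem_filter, mem_univ, true_and] at hj ⊢
    rw [h]; simpa using hj
  · intro i _; ring
  · intro j _; ring
  · intro i _; rfl

private lemma prod_shift' {n : ℕ} [NeZero n] (g : ZMod n → ℝ) (p q : ZMod n → Prop)
    [DecidablePred p] [DecidablePred q] (h : ∀ i, q i ↔ p (i + 1)) :
    ∏ i ∈ univ.filter p, g (i - 1) = ∏ j ∈ univ.filter q, g j := by
  refine Finset.prod_nbij' (fun i => i - 1) (fun j => j + 1) ?_ ?_ ?_ ?_ ?_
  · intro i hi; simp only [mem_filter, mem_univ, true_and] at hi ⊢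
    rw [h]; simpa using hi
  · intro j hj; simp only [mem_filter, mem_univ, true_and] at hj ⊢
    exact (h j).1 hj
  · intro i _; ring
  · intro j _; ring
  · intro i _; rfl
/-- `O_{n/2}(x) = ∏_{i even} x_i + ∏_{i odd} x_i` (indices in `ZMod n`, `n` even). -/
noncomputable def halfInv {n : ℕ} [NeZero n] (x : ZMod n → ℝ) : ℝ :=
  (∏ i ∈ Finset.univ.filter (fun i : ZMod n => Even i.val), x i) +
    ∏ i ∈ Finset.univ.filter (fun i : ZMod n => ¬ Even i.val), x i

/-- Corollary 2.4 (even case): for `n` even, `O_{n/2} = ∏_{i even} x_i + ∏_{i odd} x_i`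
and `E_{n/2} = ∏_{i even} y_i + ∏_{i odd} y_i` are invariant under the pentagram map. -/
theorem stmt_3 (n : ℕ) [NeZero n] (hn : 4 ≤ n) (hneven : Even n) (x y : ZMod n → ℝ)
    (hxy : ∀ i, 1 - x i * y i ≠ 0) :
    halfInv (pentX x y) = halfInv x ∧ halfInv (pentY x y) = halfInv y := by
  have hn1 : 1 < n := by omega
  have hps : ∀ i : ZMod n, Even ((i + 1).val) ↔ ¬ Even i.val := parity_succ hn1 hneven
  set f : ZMod n → ℝ := fun i => 1 - x i * y i with hf
  have hPne : ∀ (p : ZMod n → Prop) [DecidablePred p],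
      ∏ i ∈ univ.filter p, f i ≠ 0 := by
    intro p _
    exact Finset.prod_ne_zero_iff.2 fun i _ => hxy i
  -- key parity equivalences
  have hpq : ∀ i : ZMod n, Even i.val ↔ ¬ Even ((i : ZMod n) + 1).val := by
    intro i; rw [hps i]; tauto
  have hqp : ∀ i : ZMod n, ¬ Even i.val ↔ Even ((i : ZMod n) + 1).val := by
    intro i; rw [hps i]
  -- generic computation for pentX over a parity class
  have keyX : ∀ (p q : ZMod n → Prop) [DecidablePred p] [DecidablePred q],
      (∀ i, p i ↔ q (i + 1)) → (∀ i, q i ↔ p (i + 1)) →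
      ∏ i ∈ univ.filter p, pentX x y i = ∏ i ∈ univ.filter p, x i := by
    intro p q _ _ h1 h2
    simp only [pentX, ← hf]
    rw [Finset.prod_div_distrib, Finset.prod_mul_distrib,
      prod_shift' f p q h2, prod_shift f p q h1, mul_div_assoc,
      div_self (hPne q), mul_one]
  have keyY : ∀ (p q : ZMod n → Prop) [DecidablePred p] [DecidablePred q],
      (∀ i, p i ↔ q (i + 1)) → (∀ i, q i ↔ p (i + 1)) →
      ∏ i ∈ univ.filter p, pentY x y i = ∏ i ∈ univ.filter q, y i := by
    intro p q _ _ h1 h2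
    simp only [pentY, ← hf]
    rw [Finset.prod_div_distrib, Finset.prod_mul_distrib, prod_shift y p q h1]
    have h2shift : ∏ i ∈ univ.filter p, f (i + 2) = ∏ i ∈ univ.filter p, f i := by
      have e1 : ∏ i ∈ univ.filter p, f (i + 2)
          = ∏ i ∈ univ.filter p, (fun j => f (j + 1)) (i + 1) := by
        apply Finset.prod_congr rfl; intro i _; ring_nf
      rw [e1, prod_shift (fun j => f (j + 1)) p q h1, prod_shift f q p h2]
    rw [h2shift, mul_div_assoc, div_self (hPne p), mul_one]
  constructor
  · unfold halfInv
    rw [keyX _ _ hpq hqp, keyX _ _ hqp hpq]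
  · unfold halfInv
    rw [keyY _ _ hpq hqp, keyY _ _ hqp hpq, add_comm]
end

section
/- Set φ_i := 1 − x_i y_i. For the Poisson bracket one has, for all i, j ∈ ZMod n: {φ_i, φ_j} = 0; {x_i, φ_j} = (δ_{i,j−1} − δ_{i,j+1}) x_i x_j y_j; and {y_i, φ_j} = (δ_{i,j+1} − δ_{i,j−1}) x_j y_i y_j, where δ denotes the Kronecker delta. -/
open MvPolynomial

/-- The Poisson bracket on polynomials in the corner coordinates `x_i, y_i`
(`Sum.inl i ↦ x_i`, `Sum.inr i ↦ y_i`), determined by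
`{x_i, x_{i+1}} = -x_i x_{i+1}`, `{y_i, y_{i+1}} = y_i y_{i+1}`. -/
noncomputable def pb {n : ℕ} [NeZero n]
    (f g : MvPolynomial (ZMod n ⊕ ZMod n) ℝ) : MvPolynomial (ZMod n ⊕ ZMod n) ℝ :=
  ∑ i : ZMod n,
    (X (Sum.inl i) * X (Sum.inl (i + 1)) *
        (pderiv (Sum.inl (i + 1)) f * pderiv (Sum.inl i) g -
          pderiv (Sum.inl i) f * pderiv (Sum.inl (i + 1)) g) +
      X (Sum.inr i) * X (Sum.inr (i + 1)) *
        (pderiv (Sum.inr i) f * pderiv (Sum.inr (i + 1)) g -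
          pderiv (Sum.inr (i + 1)) f * pderiv (Sum.inr i) g))

/-- `φ_i = 1 - x_i y_i`. -/
noncomputable def phiP {n : ℕ} (i : ZMod n) : MvPolynomial (ZMod n ⊕ ZMod n) ℝ :=
  1 - X (Sum.inl i) * X (Sum.inr i)


private lemma dphix' {n : ℕ} (k j : ZMod n) :
    pderiv (Sum.inl k : ZMod n ⊕ ZMod n) (phiP j)
      = if k = j then -X (Sum.inr j) else 0 := by
  simp [phiP, pderiv_X, Pi.single_apply]
  split_ifs <;> simp_all

private lemma dphiy' {n : ℕ} (k j : ZMod n) :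
    pderiv (Sum.inr k : ZMod n ⊕ ZMod n) (phiP j)
      = if k = j then -X (Sum.inl j) else 0 := by
  simp [phiP, pderiv_X, Pi.single_apply]
  split_ifs <;> simp_all

private lemma shift2' {n : ℕ} (k i : ZMod n) : (k + 1 = i) ↔ (k = i - 1) := by
  rw [eq_sub_iff_add_eq]

private lemma sub_ne' {n : ℕ} (hn : 5 ≤ n) (j : ZMod n) : j - 1 ≠ j + 1 := by
  intro h
  have h2 : (2 : ZMod n) = 0 := by linear_combination -h
  have hd := (ZMod.natCast_eq_zero_iff 2 n).mp (by exact_mod_cast h2)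
  have := Nat.le_of_dvd (by norm_num) hd
  omega

/-- The bracket relations `{φ_i, φ_j} = 0`,
`{x_i, φ_j} = (δ_{i,j-1} - δ_{i,j+1}) x_i x_j y_j`, and
`{y_i, φ_j} = (δ_{i,j+1} - δ_{i,j-1}) x_j y_i y_j` from the proof of Lemma 2.9. -/
theorem stmt_4 (n : ℕ) [NeZero n] (hn : 5 ≤ n) (i j : ZMod n) :
    pb (phiP i) (phiP j) = 0 ∧
    pb (X (Sum.inl i)) (phiP j) =
      ((if i = j - 1 then 1 else 0) - (if i = j + 1 then 1 else 0)) *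
        (X (Sum.inl i) * X (Sum.inl j) * X (Sum.inr j)) ∧
    pb (X (Sum.inr i)) (phiP j) =
      ((if i = j + 1 then 1 else 0) - (if i = j - 1 then 1 else 0)) *
        (X (Sum.inl j) * X (Sum.inr i) * X (Sum.inr j)) := by
  refine ⟨?_, ?_, ?_⟩
  · simp only [pb, dphix', dphiy', pderiv_X, Pi.single_apply, shift2']
    simp only [mul_ite, ite_mul, mul_zero, zero_mul, mul_one, one_mul, mul_neg, neg_mul,
      sub_zero, zero_sub, neg_zero, Sum.inl.injEq, Sum.inr.injEq, reduceCtorEq,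
      mul_sub, sub_mul, neg_neg]
    simp only [if_false, neg_zero, ite_self, sub_zero, zero_sub, add_zero, zero_add,
      Finset.sum_sub_distrib, Finset.sum_add_distrib, Finset.sum_ite_eq', Finset.mem_univ,
      if_true, sub_add_cancel]
    rcases eq_or_ne j (i - 1) with h1 | h1 <;> rcases eq_or_ne (j - 1) i with h2 | h2
    · exfalso
      have h3 : (2 : ZMod n) = 0 := by
        have := h1 ▸ h2
        linear_combination -this
      have hd := (ZMod.natCast_eq_zero_iff 2 n).mp (by exact_mod_cast h3)
      have := Nat.le_of_dvd (by norm_num) hd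
      omega
    · subst h1; simp [h2]; ring
    · subst h2; simp [h1, sub_ne' hn]; ring
    · simp [h1, h2]
  · simp only [pb, dphix', dphiy', pderiv_X, Pi.single_apply, shift2']
    simp only [mul_ite, ite_mul, mul_zero, zero_mul, mul_one, one_mul, mul_neg, neg_mul,
      sub_zero, zero_sub, neg_zero, Sum.inl.injEq, Sum.inr.injEq, reduceCtorEq,
      mul_sub, sub_mul]
    simp only [if_false, neg_zero, ite_self, sub_zero, zero_sub, add_zero, zero_add,
      Finset.sum_sub_distrib, Finset.sum_ite_eq', Finset.mem_univ, if_true, sub_add_cancel]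
    rcases eq_or_ne i (j+1) with h1 | h1 <;> rcases eq_or_ne i (j-1) with h2 | h2
    · exact absurd (h2.symm.trans h1) (sub_ne' hn j)
    · subst h1; simp [h2]; ring
    · subst h2; simp [h1]
    · simp [h1, h2]
  · simp only [pb, dphix', dphiy', pderiv_X, Pi.single_apply, shift2']
    simp only [mul_ite, ite_mul, mul_zero, zero_mul, mul_one, one_mul, mul_neg, neg_mul,
      sub_zero, zero_sub, neg_zero, Sum.inl.injEq, Sum.inr.injEq, reduceCtorEq,
      mul_sub, sub_mul, neg_neg]
    simp only [if_false, neg_zero, ite_self, sub_zero, zero_sub, add_zero, zero_add,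
      Finset.sum_sub_distrib, Finset.sum_add_distrib, Finset.sum_ite_eq', Finset.mem_univ,
      if_true, sub_add_cancel]
    rcases eq_or_ne i (j+1) with h1 | h1 <;> rcases eq_or_ne i (j-1) with h2 | h2
    · exact absurd (h2.symm.trans h1) (sub_ne' hn j)
    · subst h1; simp [h2]; ring
    · subst h2; simp [h1]; ring
    · simp [h1, h2]
end

section
/- Let τ be the ℝ-algebra endomorphism of the polynomial ring over ℝ in the variables x_i, y_i (i ∈ ZMod n) determined by τ(x_i) = x_{1−i} and τ(y_i) = y_{−i}. Then for all polynomials f and g one has {τ(f), τ(g)} = −τ({f, g}); that is, τ is an anti-automorphism of the Poisson bracket. -/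
open MvPolynomial

/-- The claim from the proof of Lemma 2.10: the involution `τ` determined by
`τ(x_i) = x_{1-i}`, `τ(y_i) = y_{-i}` is an anti-automorphism of the Poisson
bracket: `{τ(f), τ(g)} = -τ({f, g})` for all polynomials `f, g`. -/
theorem stmt_7 (n : ℕ) [NeZero n] (hn : 5 ≤ n)
    (τ : MvPolynomial (ZMod n ⊕ ZMod n) ℝ →ₐ[ℝ] MvPolynomial (ZMod n ⊕ ZMod n) ℝ)
    (hτx : ∀ i : ZMod n, τ (X (Sum.inl i)) = X (Sum.inl (1 - i)))
    (hτy : ∀ i : ZMod n, τ (X (Sum.inr i)) = X (Sum.inr (-i)))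
    (f g : MvPolynomial (ZMod n ⊕ ZMod n) ℝ) :
    pb (τ f) (τ g) = -τ (pb f g) := by
  set σ : (ZMod n ⊕ ZMod n) → (ZMod n ⊕ ZMod n) :=
    Sum.elim (fun i => Sum.inl (1 - i)) (fun i => Sum.inr (-i)) with hσ
  have hinv : Function.Involutive σ := by
    rintro (i | i) <;> simp [hσ]
  have hτr : ∀ p, τ p = rename σ p := by
    have h : τ = (rename σ : MvPolynomial (ZMod n ⊕ ZMod n) ℝ →ₐ[ℝ] _) := by
      apply algHom_ext
      rintro (i | i)
      · simp [hτx, hσ]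
      · simp [hτy, hσ]
    intro p; rw [h]
  have hd : ∀ (j : ZMod n ⊕ ZMod n) (p : MvPolynomial (ZMod n ⊕ ZMod n) ℝ),
      pderiv (σ j) (τ p) = τ (pderiv j p) := by
    intro j p
    rw [hτr, hτr, pderiv_rename hinv.injective]
  have hdx : ∀ (j : ZMod n) p, pderiv (Sum.inl (1 - j)) (τ p) = τ (pderiv (Sum.inl j) p) :=
    fun j p => hd (Sum.inl j) p
  have hdy : ∀ (j : ZMod n) p, pderiv (Sum.inr (-j)) (τ p) = τ (pderiv (Sum.inr j) p) :=
    fun j p => hd (Sum.inr j) p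
  rw [pb, pb, map_sum, ← Finset.sum_neg_distrib]
  simp only [map_add, neg_add]
  rw [Finset.sum_add_distrib, Finset.sum_add_distrib]
  congr 1
  · refine (Fintype.sum_equiv (Equiv.subLeft (0 : ZMod n)) _ _ fun j => ?_).symm
    simp only [Equiv.subLeft_apply]
    have e1 : (0 : ZMod n) - j + 1 = 1 - j := by ring
    have e2 : (0 : ZMod n) - j = 1 - (j + 1) := by ring
    rw [e1, e2, hdx, hdx, hdx, hdx, ← hτx (j + 1), ← hτx j]
    simp only [map_mul, map_sub]
    ring
  · refine (Fintype.sum_equiv (Equiv.subLeft (-1 : ZMod n)) _ _ fun j => ?_).symm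
    simp only [Equiv.subLeft_apply]
    have e1 : (-1 : ZMod n) - j + 1 = -j := by ring
    have e2 : (-1 : ZMod n) - j = -(j + 1) := by ring
    rw [e1, e2, hdy, hdy, hdy, hdy, ← hτy (j + 1), ← hτy j]
    simp only [map_mul, map_sub]
    ring
end

section
/- The polynomials O_n = ∏_{i ∈ ZMod n} x_i and E_n = ∏_{i ∈ ZMod n} y_i are Casimir functions of the Poisson bracket: {O_n, x_j} = {O_n, y_j} = {E_n, x_j} = {E_n, y_j} = 0 for all j ∈ ZMod n. If moreover n is even, then O_{n/2} = ∏_{i even} x_i + ∏_{i odd} x_i and E_{n/2} = ∏_{i even} y_i + ∏_{i odd} y_i are also Casimir functions: their bracket with every coordinate x_j and y_j vanishes. -/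
open MvPolynomial

/-- `O_n = ∏ x_i`. -/
noncomputable def OnP (n : ℕ) [NeZero n] : MvPolynomial (ZMod n ⊕ ZMod n) ℝ :=
  ∏ i : ZMod n, X (Sum.inl i)

/-- `E_n = ∏ y_i`. -/
noncomputable def EnP (n : ℕ) [NeZero n] : MvPolynomial (ZMod n ⊕ ZMod n) ℝ :=
  ∏ i : ZMod n, X (Sum.inr i)

/-- `O_{n/2} = ∏_{i even} x_i + ∏_{i odd} x_i` (for `n` even). -/
noncomputable def OhalfP (n : ℕ) [NeZero n] : MvPolynomial (ZMod n ⊕ ZMod n) ℝ :=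
  (∏ i ∈ Finset.univ.filter (fun i : ZMod n => Even i.val), X (Sum.inl i)) +
    ∏ i ∈ Finset.univ.filter (fun i : ZMod n => ¬ Even i.val), X (Sum.inl i)

/-- `E_{n/2} = ∏_{i even} y_i + ∏_{i odd} y_i` (for `n` even). -/
noncomputable def EhalfP (n : ℕ) [NeZero n] : MvPolynomial (ZMod n ⊕ ZMod n) ℝ :=
  (∏ i ∈ Finset.univ.filter (fun i : ZMod n => Even i.val), X (Sum.inr i)) +
    ∏ i ∈ Finset.univ.filter (fun i : ZMod n => ¬ Even i.val), X (Sum.inr i)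

/- Auxiliary lemmas -/

lemma pderiv_prod_X {σ : Type*} [DecidableEq σ] (S : Finset σ) (v : σ) :
    pderiv v (∏ i ∈ S, (X i : MvPolynomial σ ℝ)) =
      if v ∈ S then ∏ i ∈ S.erase v, X i else 0 := by
  induction S using Finset.induction_on with
  | empty => simp
  | @insert a s ha ih =>
    rw [Finset.prod_insert ha, pderiv_mul, ih]
    by_cases hv : v = a
    · subst hv
      simp [ha, Finset.erase_insert ha]
    · by_cases hvs : v ∈ s
      · rw [pderiv_X_of_ne (Ne.symm hv), if_pos hvs, if_pos (Finset.mem_insert_of_mem hvs),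
          Finset.erase_insert_of_ne (Ne.symm hv),
          Finset.prod_insert (fun h => ha (Finset.mem_of_mem_erase h))]
        ring
      · simp [hv, hvs, Ne.symm hv]

lemma X_mul_pderiv_prod {σ : Type*} [DecidableEq σ] (S : Finset σ) (v : σ) :
    X v * pderiv v (∏ i ∈ S, (X i : MvPolynomial σ ℝ)) =
      if v ∈ S then ∏ i ∈ S, X i else 0 := by
  rw [pderiv_prod_X]
  by_cases h : v ∈ S
  · simp [h, Finset.mul_prod_erase S _ h]
  · simp [h]

lemma X_mul_pderiv_prod_comp {σ τ : Type*} [DecidableEq σ] [DecidableEq τ]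
    (S : Finset σ) (e : σ → τ) (he : Function.Injective e) (k : σ) :
    X (e k) * pderiv (e k) (∏ i ∈ S, (X (e i) : MvPolynomial τ ℝ)) =
      if k ∈ S then ∏ i ∈ S, X (e i) else 0 := by
  rw [← Finset.prod_image (fun a _ b _ h => he h), X_mul_pderiv_prod,
    Finset.prod_image (fun a _ b _ h => he h)]
  by_cases h : k ∈ S
  · rw [if_pos (Finset.mem_image_of_mem e h), if_pos h]
  · rw [if_neg (by simp [Finset.mem_image, he.eq_iff, h]), if_neg h]

lemma pderiv_prod_comp_zero {σ τ : Type*} [DecidableEq σ] [DecidableEq τ]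
    (S : Finset σ) (e : σ → τ) (he : Function.Injective e) (v : τ) (hv : ∀ i, v ≠ e i) :
    pderiv v (∏ i ∈ S, (X (e i) : MvPolynomial τ ℝ)) = 0 := by
  rw [← Finset.prod_image (fun a _ b _ h => he h), pderiv_prod_X,
    if_neg (fun hmem => by
      obtain ⟨i, _, hi⟩ := Finset.mem_image.mp hmem
      exact hv i hi.symm)]

lemma pderiv_inl_X_inl {n : ℕ} [NeZero n] (i j : ZMod n) :
    (pderiv (Sum.inl i)) (X (Sum.inl j) : MvPolynomial (ZMod n ⊕ ZMod n) ℝ)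
      = if i = j then 1 else 0 := by
  by_cases h : i = j
  · simp [h]
  · rw [if_neg h, pderiv_X_of_ne (by simp [Ne.symm h])]

lemma pderiv_inr_X_inr {n : ℕ} [NeZero n] (i j : ZMod n) :
    (pderiv (Sum.inr i)) (X (Sum.inr j) : MvPolynomial (ZMod n ⊕ ZMod n) ℝ)
      = if i = j then 1 else 0 := by
  by_cases h : i = j
  · simp [h]
  · rw [if_neg h, pderiv_X_of_ne (by simp [Ne.symm h])]

lemma pb_X_inl {n : ℕ} [NeZero n] (f : MvPolynomial (ZMod n ⊕ ZMod n) ℝ) (j : ZMod n) :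
    pb f (X (Sum.inl j)) =
    X (Sum.inl j) * X (Sum.inl (j + 1)) * pderiv (Sum.inl (j + 1)) f -
      X (Sum.inl (j - 1)) * X (Sum.inl j) * pderiv (Sum.inl (j - 1)) f := by
  unfold pb
  have key : ∀ i : ZMod n,
      (X (Sum.inl i) * X (Sum.inl (i + 1)) *
        (pderiv (Sum.inl (i + 1)) f * pderiv (Sum.inl i) (X (Sum.inl j) : MvPolynomial (ZMod n ⊕ ZMod n) ℝ) -
          pderiv (Sum.inl i) f * pderiv (Sum.inl (i + 1)) (X (Sum.inl j))) +
      X (Sum.inr i) * X (Sum.inr (i + 1)) *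
        (pderiv (Sum.inr i) f * pderiv (Sum.inr (i + 1)) (X (Sum.inl j)) -
          pderiv (Sum.inr (i + 1)) f * pderiv (Sum.inr i) (X (Sum.inl j)))) =
      (if i = j then X (Sum.inl j) * X (Sum.inl (j + 1)) * pderiv (Sum.inl (j + 1)) f else 0) -
      (if i = j - 1 then X (Sum.inl (j - 1)) * X (Sum.inl j) * pderiv (Sum.inl (j - 1)) f else 0) := by
    intro i
    rw [pderiv_inl_X_inl, pderiv_inl_X_inl,
      pderiv_X_of_ne (by simp), pderiv_X_of_ne (by simp)]
    have h2 : (i + 1 = j) ↔ (i = j - 1) := eq_sub_iff_add_eq.symm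
    simp only [h2]
    by_cases h : i = j
    · subst h
      by_cases h' : i = i - 1
      · simp only [if_pos (rfl : i = i)]
        rw [if_pos h', if_pos h', h2.mpr h', ← h']
        simp
      · simp only [if_pos (rfl : i = i)]
        rw [if_neg h', if_neg h']
        simp
    · rw [if_neg h]
      by_cases h' : i = j - 1
      · subst h'
        simp only [if_pos (rfl : j - 1 = j - 1)]
        rw [if_neg h, sub_add_cancel]
        simp
      · rw [if_neg h, if_neg h', if_neg h']
        ring
  simp only [key]
  rw [Finset.sum_sub_distrib,
    Finset.sum_ite_eq' Finset.univ j, Finset.sum_ite_eq' Finset.univ (j - 1),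
    if_pos (Finset.mem_univ _), if_pos (Finset.mem_univ _)]

lemma pb_X_inr {n : ℕ} [NeZero n] (f : MvPolynomial (ZMod n ⊕ ZMod n) ℝ) (j : ZMod n) :
    pb f (X (Sum.inr j)) =
    X (Sum.inr (j - 1)) * X (Sum.inr j) * pderiv (Sum.inr (j - 1)) f -
      X (Sum.inr j) * X (Sum.inr (j + 1)) * pderiv (Sum.inr (j + 1)) f := by
  unfold pb
  have key : ∀ i : ZMod n,
      (X (Sum.inl i) * X (Sum.inl (i + 1)) *
        (pderiv (Sum.inl (i + 1)) f * pderiv (Sum.inl i) (X (Sum.inr j) : MvPolynomial (ZMod n ⊕ ZMod n) ℝ) -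
          pderiv (Sum.inl i) f * pderiv (Sum.inl (i + 1)) (X (Sum.inr j))) +
      X (Sum.inr i) * X (Sum.inr (i + 1)) *
        (pderiv (Sum.inr i) f * pderiv (Sum.inr (i + 1)) (X (Sum.inr j)) -
          pderiv (Sum.inr (i + 1)) f * pderiv (Sum.inr i) (X (Sum.inr j)))) =
      (if i = j - 1 then X (Sum.inr (j - 1)) * X (Sum.inr j) * pderiv (Sum.inr (j - 1)) f else 0) -
      (if i = j then X (Sum.inr j) * X (Sum.inr (j + 1)) * pderiv (Sum.inr (j + 1)) f else 0) := by
    intro i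
    rw [pderiv_inr_X_inr, pderiv_inr_X_inr,
      pderiv_X_of_ne (by simp), pderiv_X_of_ne (by simp)]
    have h2 : (i + 1 = j) ↔ (i = j - 1) := eq_sub_iff_add_eq.symm
    simp only [h2]
    by_cases h : i = j
    · subst h
      by_cases h' : i = i - 1
      · simp only [if_pos (rfl : i = i)]
        rw [if_pos h', if_pos h', h2.mpr h', ← h']
        simp
      · simp only [if_pos (rfl : i = i)]
        rw [if_neg h', if_neg h']
        simp
    · rw [if_neg h]
      by_cases h' : i = j - 1
      · subst h'
        simp only [if_pos (rfl : j - 1 = j - 1)]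
        rw [if_neg h, sub_add_cancel]
        simp
      · rw [if_neg h, if_neg h', if_neg h']
        ring
  simp only [key]
  rw [Finset.sum_sub_distrib,
    Finset.sum_ite_eq' Finset.univ (j - 1), Finset.sum_ite_eq' Finset.univ j,
    if_pos (Finset.mem_univ _), if_pos (Finset.mem_univ _)]

lemma parity_step {n : ℕ} [NeZero n] (hn2 : 2 < n) (hne : Even n) (a : ZMod n) :
    Even ((a + 2).val) ↔ Even a.val := by
  have h2 : ((2 : ZMod n)).val = 2 := by
    have : ((2 : ℕ) : ZMod n) = 2 := by norm_cast
    rw [← this, ZMod.val_natCast, Nat.mod_eq_of_lt hn2]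
  rw [ZMod.val_add, h2, Nat.even_iff, Nat.even_iff,
    Nat.mod_mod_of_dvd _ hne.two_dvd]
  omega

/-- Lemma 2.11: `O_n` and `E_n` are Casimir functions of the Poisson bracket,
and so are `O_{n/2}` and `E_{n/2}` when `n` is even. -/
theorem stmt_9 (n : ℕ) [NeZero n] (hn : 4 ≤ n) :
    (∀ j : ZMod n,
      pb (OnP n) (X (Sum.inl j)) = 0 ∧ pb (OnP n) (X (Sum.inr j)) = 0 ∧
      pb (EnP n) (X (Sum.inl j)) = 0 ∧ pb (EnP n) (X (Sum.inr j)) = 0) ∧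
    (Even n → ∀ j : ZMod n,
      pb (OhalfP n) (X (Sum.inl j)) = 0 ∧ pb (OhalfP n) (X (Sum.inr j)) = 0 ∧
      pb (EhalfP n) (X (Sum.inl j)) = 0 ∧ pb (EhalfP n) (X (Sum.inr j)) = 0) := by
  have hinl : Function.Injective (Sum.inl : ZMod n → ZMod n ⊕ ZMod n) := Sum.inl_injective
  have hinr : Function.Injective (Sum.inr : ZMod n → ZMod n ⊕ ZMod n) := Sum.inr_injective
  -- derivative helper lemmas for OnP / EnP
  have hOn : ∀ k : ZMod n, X (Sum.inl k) * pderiv (Sum.inl k) (OnP n) = OnP n := by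
    intro k
    rw [OnP, X_mul_pderiv_prod_comp _ _ hinl, if_pos (Finset.mem_univ _)]
  have hOn0 : ∀ k : ZMod n, pderiv (Sum.inr k) (OnP n) = 0 := by
    intro k
    rw [OnP, pderiv_prod_comp_zero _ _ hinl _ (by simp)]
  have hEn : ∀ k : ZMod n, X (Sum.inr k) * pderiv (Sum.inr k) (EnP n) = EnP n := by
    intro k
    rw [EnP, X_mul_pderiv_prod_comp _ _ hinr, if_pos (Finset.mem_univ _)]
  have hEn0 : ∀ k : ZMod n, pderiv (Sum.inl k) (EnP n) = 0 := by
    intro k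
    rw [EnP, pderiv_prod_comp_zero _ _ hinr _ (by simp)]
  constructor
  · intro j
    refine ⟨?_, ?_, ?_, ?_⟩
    · rw [pb_X_inl, mul_assoc, hOn, mul_comm (X (Sum.inl (j - 1))), mul_assoc, hOn, sub_self]
    · rw [pb_X_inr, hOn0, hOn0, mul_zero, mul_zero, sub_self]
    · rw [pb_X_inl, hEn0, hEn0, mul_zero, mul_zero, sub_self]
    · rw [pb_X_inr, mul_comm (X (Sum.inr (j - 1))), mul_assoc, hEn, mul_assoc, hEn, sub_self]
  · intro hne j
    have hn2 : 2 < n := by omega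
    have hpar : Even ((j + 1).val) ↔ Even ((j - 1).val) := by
      have h := parity_step hn2 hne (j - 1)
      rwa [show j - 1 + 2 = j + 1 by ring] at h
    -- derivative helpers for OhalfP / EhalfP
    have hOh : ∀ k : ZMod n, X (Sum.inl k) * pderiv (Sum.inl k) (OhalfP n) =
        if Even k.val
        then ∏ i ∈ Finset.univ.filter (fun i : ZMod n => Even i.val), X (Sum.inl i)
        else ∏ i ∈ Finset.univ.filter (fun i : ZMod n => ¬ Even i.val), X (Sum.inl i) := by
      intro k
      rw [OhalfP, map_add, mul_add, X_mul_pderiv_prod_comp _ _ hinl,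
        X_mul_pderiv_prod_comp _ _ hinl]
      by_cases h : Even k.val
      · rw [if_pos (by simp [h]), if_neg (by simp [h]), if_pos h, add_zero]
      · rw [if_neg (by simp [h]), if_pos (by simp [Nat.not_even_iff_odd.mpr (Nat.not_even_iff_odd.mp h)]; exact Nat.not_even_iff_odd.mp h), if_neg h, zero_add]
    have hOh0 : ∀ k : ZMod n, pderiv (Sum.inr k) (OhalfP n) = 0 := by
      intro k
      rw [OhalfP, map_add, pderiv_prod_comp_zero _ _ hinl _ (by simp),
        pderiv_prod_comp_zero _ _ hinl _ (by simp), add_zero]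
    have hEh : ∀ k : ZMod n, X (Sum.inr k) * pderiv (Sum.inr k) (EhalfP n) =
        if Even k.val
        then ∏ i ∈ Finset.univ.filter (fun i : ZMod n => Even i.val), X (Sum.inr i)
        else ∏ i ∈ Finset.univ.filter (fun i : ZMod n => ¬ Even i.val), X (Sum.inr i) := by
      intro k
      rw [EhalfP, map_add, mul_add, X_mul_pderiv_prod_comp _ _ hinr,
        X_mul_pderiv_prod_comp _ _ hinr]
      by_cases h : Even k.val
      · rw [if_pos (by simp [h]), if_neg (by simp [h]), if_pos h, add_zero]
      · rw [if_neg (by simp [h]), if_pos (by simp [Nat.not_even_iff_odd.mpr (Nat.not_even_iff_odd.mp h)]; exact Nat.not_even_iff_odd.mp h), if_neg h, zero_add]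
    have hEh0 : ∀ k : ZMod n, pderiv (Sum.inl k) (EhalfP n) = 0 := by
      intro k
      rw [EhalfP, map_add, pderiv_prod_comp_zero _ _ hinr _ (by simp),
        pderiv_prod_comp_zero _ _ hinr _ (by simp), add_zero]
    refine ⟨?_, ?_, ?_, ?_⟩
    · rw [pb_X_inl, mul_assoc, hOh, mul_comm (X (Sum.inl (j - 1))), mul_assoc, hOh]
      simp only [hpar]
      rw [sub_self]
    · rw [pb_X_inr, hOh0, hOh0, mul_zero, mul_zero, sub_self]
    · rw [pb_X_inl, hEh0, hEh0, mul_zero, mul_zero, sub_self]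
    · rw [pb_X_inr, mul_comm (X (Sum.inr (j - 1))), mul_assoc, hEh, mul_assoc, hEh]
      simp only [hpar]
      rw [sub_self]
end

section
/- Let a, b : ℤ → ℝ and let V : ℤ → ℝ³ satisfy V_{i+3} = a_i V_{i+2} + b_i V_{i+1} + V_i and det(V_i, V_{i+1}, V_{i+2}) = 1 for all i ∈ ℤ. Define U_i := V_i × V_{i+1}. Then for all i ∈ ℤ: det(U_i, U_{i+1}, U_{i+2}) = 1 and U_{i+3} = −b_{i+1} U_{i+2} − a_i U_{i+1} + U_i. (Thus the projective duality map α transforms the difference equation with coefficients (a_i, b_i) into the one with coefficients (−b_{i+1}, −a_i).) -/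
/-- `det3 u v w` is the determinant of the 3×3 matrix with columns `u, v, w`
(equivalently, the determinant of the matrix with rows `u, v, w`). -/
noncomputable def det3 (u v w : Fin 3 → ℝ) : ℝ :=
  Matrix.det (Matrix.of ![u, v, w])

/-- Lemma 4.6 (the duality `α`): if `V : ℤ → ℝ³` satisfies
`V_{i+3} = a_i V_{i+2} + b_i V_{i+1} + V_i` and `det(V_i, V_{i+1}, V_{i+2}) = 1`,
then `U_i := V_i × V_{i+1}` satisfies `det(U_i, U_{i+1}, U_{i+2}) = 1` and
`U_{i+3} = -b_{i+1} U_{i+2} - a_i U_{i+1} + U_i`. -/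
theorem stmt_11 (a b : ℤ → ℝ) (V : ℤ → Fin 3 → ℝ)
    (hrec : ∀ i : ℤ, V (i + 3) = a i • V (i + 2) + b i • V (i + 1) + V i)
    (hdet : ∀ i : ℤ, det3 (V i) (V (i + 1)) (V (i + 2)) = 1)
    (U : ℤ → Fin 3 → ℝ)
    (hU : ∀ i : ℤ, U i = crossProduct (V i) (V (i + 1))) :
    ∀ i : ℤ,
      det3 (U i) (U (i + 1)) (U (i + 2)) = 1 ∧
      U (i + 3) = -b (i + 1) • U (i + 2) + -a i • U (i + 1) + U i := by
  intro i
  have h3 : V (i + 3) = a i • V (i + 2) + b i • V (i + 1) + V i := hrec i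
  have h4 := hrec (i + 1)
  rw [show i+1+3 = i+4 by ring, show i+1+2 = i+3 by ring, show i+1+1 = i+2 by ring] at h4
  have hd : det3 (V i) (V (i + 1)) (V (i + 2)) = 1 := hdet i
  have e1 : U i = crossProduct (V i) (V (i+1)) := hU i
  have e2 := hU (i+1); rw [show i+1+1 = i+2 by ring] at e2
  have e3 := hU (i+2); rw [show i+2+1 = i+3 by ring] at e3
  have e4 := hU (i+3); rw [show i+3+1 = i+4 by ring] at e4
  set u := V i with hu
  set v := V (i+1) with hv
  set w := V (i+2) with hw
  simp only [det3, Matrix.det_fin_three, Matrix.of_apply, Matrix.cons_val',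
    Matrix.cons_val_zero, Matrix.cons_val_one, Matrix.head_cons, Matrix.head_fin_const,
    Matrix.empty_val', Matrix.cons_val_fin_one, Matrix.cons_val_two, Matrix.tail_cons] at hd ⊢
  constructor
  · rw [e1, e2, e3, h3]
    simp only [crossProduct, LinearMap.mk₂_apply, Pi.add_apply, Pi.smul_apply, smul_eq_mul,
      Matrix.cons_val_zero, Matrix.cons_val_one, Matrix.head_cons, Matrix.cons_val_two,
      Matrix.tail_cons]
    nlinarith [hd, sq_nonneg (u 0)]
  · rw [e4, e3, e2, e1, h4, h3]
    funext j
    fin_cases j <;>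
      simp [crossProduct, Pi.add_apply, Pi.smul_apply, smul_eq_mul] <;> ring
end

section
/- Let a, b : ℤ → ℝ satisfy 1 + b_{i−1} a_i ≠ 0 for all i, let V : ℤ → ℝ³ satisfy V_{i+3} = a_i V_{i+2} + b_i V_{i+1} + V_i and det(V_i, V_{i+1}, V_{i+2}) = 1 for all i, and let λ : ℤ → ℝ satisfy λ_i λ_{i+1} λ_{i+2} = −1/(1 + b_{i−1} a_i) for all i. Set W_i := λ_i (V_{i−1} × V_{i+1}). Then for all i ∈ ℤ: det(W_i, W_{i+1}, W_{i+2}) = 1 and W_{i+3} = −(λ_i b_{i−1}/λ_{i+2}) W_{i+2} − (λ_{i+3} a_{i+1}/λ_{i+1}) W_{i+1} + W_i. (Thus the duality map β transforms the difference equation with coefficients (a_i, b_i) into the one with coefficients β*(a_i) = −λ_i b_{i−1}/λ_{i+2}, β*(b_i) = −λ_{i+3} a_{i+1}/λ_{i+1}.) -/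
/-- Lemma 4.7 (the duality `β`): if `V_{i+3} = a_i V_{i+2} + b_i V_{i+1} + V_i`,
`det(V_i, V_{i+1}, V_{i+2}) = 1`, and `λ_i λ_{i+1} λ_{i+2} = -1/(1 + b_{i-1} a_i)`,
then `W_i := λ_i (V_{i-1} × V_{i+1})` satisfies `det(W_i, W_{i+1}, W_{i+2}) = 1` and
`W_{i+3} = -(λ_i b_{i-1}/λ_{i+2}) W_{i+2} - (λ_{i+3} a_{i+1}/λ_{i+1}) W_{i+1} + W_i`. -/
theorem stmt_13 (a b lam : ℤ → ℝ)
    (hba : ∀ i : ℤ, 1 + b (i - 1) * a i ≠ 0)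
    (V : ℤ → Fin 3 → ℝ)
    (hrec : ∀ i : ℤ, V (i + 3) = a i • V (i + 2) + b i • V (i + 1) + V i)
    (hdet : ∀ i : ℤ, det3 (V i) (V (i + 1)) (V (i + 2)) = 1)
    (hlam : ∀ i : ℤ, lam i * lam (i + 1) * lam (i + 2) = -1 / (1 + b (i - 1) * a i))
    (W : ℤ → Fin 3 → ℝ)
    (hW : ∀ i : ℤ, W i = lam i • crossProduct (V (i - 1)) (V (i + 1))) :
    ∀ i : ℤ,
      det3 (W i) (W (i + 1)) (W (i + 2)) = 1 ∧
      W (i + 3) = -(lam i * b (i - 1) / lam (i + 2)) • W (i + 2) +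
        -(lam (i + 3) * a (i + 1) / lam (i + 1)) • W (i + 1) + W i := by
  have hlam' : ∀ j : ℤ, lam j * lam (j + 1) * lam (j + 2) * (1 + b (j - 1) * a j) = -1 := by
    intro j
    rw [hlam j, div_mul_cancel₀ _ (hba j)]
  have hlamne : ∀ j : ℤ, lam j ≠ 0 := by
    intro j hz
    have h := hlam' j
    rw [hz] at h
    norm_num at h
  intro i
  -- specialized hypotheses with normalized indices
  have hT : V (i + 3) = a i • V (i + 2) + b i • V (i + 1) + V i := hrec i
  have hS : V (i + 4) = a (i + 1) • V (i + 3) + b (i + 1) • V (i + 2) + V (i + 1) := by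
    have h := hrec (i + 1)
    simp only [show i + 1 + 3 = i + 4 by ring, show i + 1 + 2 = i + 3 by ring,
      show i + 1 + 1 = i + 2 by ring] at h
    exact h
  have hX : V (i - 1) = V (i + 2) - a (i - 1) • V (i + 1) - b (i - 1) • V i := by
    have h := hrec (i - 1)
    simp only [show i - 1 + 3 = i + 2 by ring, show i - 1 + 2 = i + 1 by ring,
      show i - 1 + 1 = i by ring] at h
    rw [h]; abel
  have hW0 : W i = lam i • crossProduct (V (i - 1)) (V (i + 1)) := hW i
  have hW1 : W (i + 1) = lam (i + 1) • crossProduct (V i) (V (i + 2)) := by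
    have h := hW (i + 1)
    simp only [show i + 1 - 1 = i by ring, show i + 1 + 1 = i + 2 by ring] at h
    exact h
  have hW2 : W (i + 2) = lam (i + 2) • crossProduct (V (i + 1)) (V (i + 3)) := by
    have h := hW (i + 2)
    simp only [show i + 2 - 1 = i + 1 by ring, show i + 2 + 1 = i + 3 by ring] at h
    exact h
  have hW3 : W (i + 3) = lam (i + 3) • crossProduct (V (i + 2)) (V (i + 4)) := by
    have h := hW (i + 3)
    simp only [show i + 3 - 1 = i + 2 by ring, show i + 3 + 1 = i + 4 by ring] at h
    exact h
  have hl0 : lam i * lam (i + 1) * lam (i + 2) * (1 + b (i - 1) * a i) = -1 := hlam' i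
  have hl1 : lam (i + 1) * lam (i + 2) * lam (i + 3) * (1 + b i * a (i + 1)) = -1 := by
    have h := hlam' (i + 1)
    simp only [show i + 1 - 1 = i by ring, show i + 1 + 1 = i + 2 by ring,
      show i + 1 + 2 = i + 3 by ring] at h
    exact h
  have key : lam (i + 3) * (1 + b i * a (i + 1)) = lam i * (1 + b (i - 1) * a i) := by
    apply mul_left_cancel₀ (mul_ne_zero (hlamne (i + 1)) (hlamne (i + 2)))
    linear_combination hl1 - hl0
  have hd : V i 0 * (V (i+1) 1 * V (i+2) 2) - V i 0 * (V (i+1) 2 * V (i+2) 1)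
      - V i 1 * (V (i+1) 0 * V (i+2) 2) + V i 1 * (V (i+1) 2 * V (i+2) 0)
      + V i 2 * (V (i+1) 0 * V (i+2) 1) - V i 2 * (V (i+1) 1 * V (i+2) 0) = 1 := by
    have h := hdet i
    simp only [det3, Matrix.det_fin_three, Matrix.of_apply, Matrix.cons_val',
      Matrix.cons_val_zero, Matrix.cons_val_one, Matrix.head_cons, Matrix.empty_val',
      Matrix.cons_val_fin_one, Matrix.head_fin_const, Matrix.cons_val_two, Matrix.tail_cons] at h
    linear_combination h
  constructor
  · rw [hW0, hW1, hW2, hX, hT]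
    simp only [det3, Matrix.det_fin_three, Matrix.of_apply, Matrix.cons_val',
      Matrix.cons_val_zero, Matrix.cons_val_one, Matrix.head_cons, Matrix.empty_val',
      Matrix.cons_val_fin_one, Matrix.head_fin_const, Matrix.cons_val_two, Matrix.tail_cons,
      cross_apply, Pi.smul_apply, Pi.add_apply, Pi.sub_apply, smul_eq_mul]
    set d := V i 0 * (V (i+1) 1 * V (i+2) 2) - V i 0 * (V (i+1) 2 * V (i+2) 1)
      - V i 1 * (V (i+1) 0 * V (i+2) 2) + V i 1 * (V (i+1) 2 * V (i+2) 0)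
      + V i 2 * (V (i+1) 0 * V (i+2) 1) - V i 2 * (V (i+1) 1 * V (i+2) 0) with hdd
    linear_combination (-(d^2)) * hl0 + (d + 1) * hd
  · rw [hW0, hW1, hW2, hW3]
    have c2 : (-(lam i * b (i - 1) / lam (i + 2))) • (lam (i + 2) • crossProduct (V (i + 1)) (V (i + 3)))
        = (-(lam i * b (i - 1))) • crossProduct (V (i + 1)) (V (i + 3)) := by
      rw [smul_smul, neg_mul, div_mul_cancel₀ _ (hlamne (i + 2))]
    have c1 : (-(lam (i + 3) * a (i + 1) / lam (i + 1))) • (lam (i + 1) • crossProduct (V i) (V (i + 2)))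
        = (-(lam (i + 3) * a (i + 1))) • crossProduct (V i) (V (i + 2)) := by
      rw [smul_smul, neg_mul, div_mul_cancel₀ _ (hlamne (i + 1))]
    rw [c2, c1, hS, hT, hX]
    have expand : ∀ j : Fin 3,
        (lam (i + 3) • crossProduct (V (i + 2))
          (a (i + 1) • (a i • V (i + 2) + b i • V (i + 1) + V i) + b (i + 1) • V (i + 2) + V (i + 1))) j =
        ((-(lam i * b (i - 1))) • crossProduct (V (i + 1)) (a i • V (i + 2) + b i • V (i + 1) + V i) +
          (-(lam (i + 3) * a (i + 1))) • crossProduct (V i) (V (i + 2)) +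
          lam i • crossProduct (V (i + 2) - a (i - 1) • V (i + 1) - b (i - 1) • V i) (V (i + 1))) j := by
      intro j
      fin_cases j
      · simp only [cross_apply, Pi.smul_apply, Pi.add_apply, Pi.sub_apply, smul_eq_mul,
          Matrix.cons_val_zero, Matrix.cons_val_one, Matrix.head_cons, Matrix.cons_val_two,
          Matrix.tail_cons, Fin.isValue, Fin.zero_eta, Fin.mk_one, Fin.reduceFinMk]
        linear_combination (V (i + 2) 1 * V (i + 1) 2 - V (i + 2) 2 * V (i + 1) 1) * key
      · simp only [cross_apply, Pi.smul_apply, Pi.add_apply, Pi.sub_apply, smul_eq_mul,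
          Matrix.cons_val_zero, Matrix.cons_val_one, Matrix.head_cons, Matrix.cons_val_two,
          Matrix.tail_cons, Fin.isValue, Fin.zero_eta, Fin.mk_one, Fin.reduceFinMk]
        linear_combination (V (i + 2) 2 * V (i + 1) 0 - V (i + 2) 0 * V (i + 1) 2) * key
      · simp only [cross_apply, Pi.smul_apply, Pi.add_apply, Pi.sub_apply, smul_eq_mul,
          Matrix.cons_val_zero, Matrix.cons_val_one, Matrix.head_cons, Matrix.cons_val_two,
          Matrix.tail_cons, Fin.isValue, Fin.zero_eta, Fin.mk_one, Fin.reduceFinMk]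
        linear_combination (V (i + 2) 0 * V (i + 1) 1 - V (i + 2) 1 * V (i + 1) 0) * key
    exact funext expand
end

section
/- Let n ≥ 4, let a, b : ZMod n → ℝ satisfy a_i ≠ 0, b_i ≠ 0 and 1 + b_{i−1} a_i ≠ 0 for all i, and let λ : ZMod n → ℝ satisfy λ_i λ_{i+1} λ_{i+2} = −1/(1 + b_{i−1} a_i) for all i. Define the corner invariants x_i := a_{i−2}/(b_{i−2} b_{i−1}) and y_i := −b_{i−1}/(a_{i−2} a_{i−1}), set T*a_i := λ_{i+4} a_{i+2}/λ_{i+2} and T*b_i := λ_i b_{i−1}/λ_{i+2}, and let T*x_i := T*a_{i−2}/(T*b_{i−2} · T*b_{i−1}) and T*y_i := −T*b_{i−1}/(T*a_{i−2} · T*a_{i−1}). Then for all i ∈ ZMod n, 1 − x_i y_i ≠ 0, and T*x_i = x_i (1 − x_{i−1} y_{i−1})/(1 − x_{i+1} y_{i+1}) and T*y_i = y_{i+1} (1 − x_{i+2} y_{i+2})/(1 − x_i y_i). -/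
/-- Proposition 4.9 (i) / Lemma 2.2: the pentagram map, expressed on the
`(a,b)`-coordinates by `T*a_i = λ_{i+4} a_{i+2}/λ_{i+2}`, `T*b_i = λ_i b_{i-1}/λ_{i+2}`,
takes the corner invariants `x_i = a_{i-2}/(b_{i-2} b_{i-1})`,
`y_i = -b_{i-1}/(a_{i-2} a_{i-1})` to
`T*x_i = x_i (1 - x_{i-1} y_{i-1})/(1 - x_{i+1} y_{i+1})` and
`T*y_i = y_{i+1} (1 - x_{i+2} y_{i+2})/(1 - x_i y_i)`. -/
theorem stmt_15 (n : ℕ) (hn : 4 ≤ n)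
    (a b lam : ZMod n → ℝ)
    (ha : ∀ i, a i ≠ 0) (hb : ∀ i, b i ≠ 0)
    (hba : ∀ i : ZMod n, 1 + b (i - 1) * a i ≠ 0)
    (hlam : ∀ i : ZMod n, lam i * lam (i + 1) * lam (i + 2) = -1 / (1 + b (i - 1) * a i))
    (x y Ta Tb Tx Ty : ZMod n → ℝ)
    (hx : ∀ i, x i = a (i - 2) / (b (i - 2) * b (i - 1)))
    (hy : ∀ i, y i = -b (i - 1) / (a (i - 2) * a (i - 1)))
    (hTa : ∀ i, Ta i = lam (i + 4) * a (i + 2) / lam (i + 2))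
    (hTb : ∀ i, Tb i = lam i * b (i - 1) / lam (i + 2))
    (hTx : ∀ i, Tx i = Ta (i - 2) / (Tb (i - 2) * Tb (i - 1)))
    (hTy : ∀ i, Ty i = -Tb (i - 1) / (Ta (i - 2) * Ta (i - 1))) :
    ∀ i : ZMod n,
      1 - x i * y i ≠ 0 ∧
      Tx i = x i * (1 - x (i - 1) * y (i - 1)) / (1 - x (i + 1) * y (i + 1)) ∧
      Ty i = y (i + 1) * (1 - x (i + 2) * y (i + 2)) / (1 - x i * y i) := by
  have hlamne : ∀ j : ZMod n, lam j ≠ 0 := by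
    intro j hj
    have h := hlam j
    rw [hj, zero_mul, zero_mul, eq_comm, div_eq_zero_iff] at h
    rcases h with h | h
    · norm_num at h
    · exact hba j h
  have hlam' : ∀ j : ZMod n, lam j * lam (j+1) * lam (j+2) * (1 + b (j-1) * a j) = -1 := by
    intro j
    rw [hlam j, div_mul_cancel₀]
    exact hba j
  have key : ∀ i : ZMod n, 1 - x i * y i = (1 + b (i-2) * a (i-1)) / (b (i-2) * a (i-1)) := by
    intro i
    have h1 := ha (i-2); have h2 := ha (i-1); have h3 := hb (i-2); have h4 := hb (i-1)
    rw [hx, hy]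
    field_simp
    ring
  have keyne : ∀ i : ZMod n, 1 - x i * y i ≠ 0 := by
    intro i
    rw [key i]
    have := hba (i-1)
    rw [show (i-1) - 1 = i - 2 from by ring] at this
    exact div_ne_zero this (mul_ne_zero (hb _) (ha _))
  intro i
  refine ⟨keyne i, ?_, ?_⟩
  · -- Tx
    have e1 : Ta (i-2) = lam (i+2) * a i / lam i := by
      rw [hTa, show (i-2 : ZMod n)+4 = i+2 from by ring, show (i-2 : ZMod n)+2 = i from by ring]
    have e2 : Tb (i-2) = lam (i-2) * b (i-3) / lam i := by
      rw [hTb, show (i-2 : ZMod n)-1 = i-3 from by ring, show (i-2 : ZMod n)+2 = i from by ring]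
    have e3 : Tb (i-1) = lam (i-1) * b (i-2) / lam (i+1) := by
      rw [hTb, show (i-1 : ZMod n)-1 = i-2 from by ring, show (i-1 : ZMod n)+2 = i+1 from by ring]
    have P1 := hlam' i
    have P2 := hlam' (i-2)
    rw [show (i-2 : ZMod n)+1 = i-1 from by ring, show (i-2 : ZMod n)+2 = i from by ring,
        show (i-2 : ZMod n)-1 = i-3 from by ring] at P2
    rw [hTx, e1, e2, e3, hx i, key (i-1), key (i+1),
        show (i-1 : ZMod n)-2 = i-3 from by ring, show (i-1 : ZMod n)-1 = i-2 from by ring,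
        show (i+1 : ZMod n)-2 = i-1 from by ring, show (i+1 : ZMod n)-1 = i from by ring]
    have hne1 := hba i
    have hne2 : 1 + b (i-3) * a (i-2) ≠ 0 := by
      have := hba (i-2); rwa [show (i-2 : ZMod n)-1 = i-3 from by ring] at this
    have n1 := hlamne i; have n2 := hlamne (i+1); have n3 := hlamne (i+2)
    have n4 := hlamne (i-1); have n5 := hlamne (i-2)
    have a1 := ha i; have a2 := ha (i-2); have a3 := ha (i-1)
    have b1 := hb (i-3); have b2 := hb (i-2); have b3 := hb (i-1)
    field_simp
    rw [eq_div_iff (by rw [mul_comm (a i)]; exact hne1)]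
    refine mul_left_cancel₀ n1 ?_
    linear_combination P1 - P2
  · -- Ty
    have e1 : Ta (i-2) = lam (i+2) * a i / lam i := by
      rw [hTa, show (i-2 : ZMod n)+4 = i+2 from by ring, show (i-2 : ZMod n)+2 = i from by ring]
    have e3 : Tb (i-1) = lam (i-1) * b (i-2) / lam (i+1) := by
      rw [hTb, show (i-1 : ZMod n)-1 = i-2 from by ring, show (i-1 : ZMod n)+2 = i+1 from by ring]
    have e6 : Ta (i-1) = lam (i+3) * a (i+1) / lam (i+1) := by
      rw [hTa, show (i-1 : ZMod n)+4 = i+3 from by ring, show (i-1 : ZMod n)+2 = i+1 from by ring]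
    have P3 := hlam' (i-1)
    rw [show (i-1 : ZMod n)+1 = i from by ring, show (i-1 : ZMod n)+2 = i+1 from by ring,
        show (i-1 : ZMod n)-1 = i-2 from by ring] at P3
    have P4 := hlam' (i+1)
    rw [show (i+1 : ZMod n)+1 = i+2 from by ring, show (i+1 : ZMod n)+2 = i+3 from by ring,
        show (i+1 : ZMod n)-1 = i from by ring] at P4
    rw [hTy, e1, e3, e6, hy (i+1), key (i+2), key i,
        show (i+1 : ZMod n)-1 = i from by ring, show (i+1 : ZMod n)-2 = i-1 from by ring,
        show (i+2 : ZMod n)-2 = i from by ring, show (i+2 : ZMod n)-1 = i+1 from by ring]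
    have hne3 : 1 + b (i-2) * a (i-1) ≠ 0 := by
      have := hba (i-1); rwa [show (i-1 : ZMod n)-1 = i-2 from by ring] at this
    have hne4 : 1 + b i * a (i+1) ≠ 0 := by
      have := hba (i+1); rwa [show (i+1 : ZMod n)-1 = i from by ring] at this
    have n1 := hlamne i; have n2 := hlamne (i+1); have n3 := hlamne (i+2)
    have n4 := hlamne (i-1); have n6 := hlamne (i+3)
    have a1 := ha i; have a3 := ha (i-1); have a4 := ha (i+1)
    have b2 := hb (i-2); have b4 := hb i
    field_simp
    refine mul_left_cancel₀ n2 ?_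
    linear_combination P4 - P3
end

section
/- Let n = 3m+1 or n = 3m+2 with m ≥ 1. Define a Poisson bracket on rational functions of the variables a_i, b_i (i ∈ ZMod n) as the skew-symmetric biderivation with {a_i, a_j} = (∑_{k=1}^{m} (δ_{i,j+3k} − δ_{i,j−3k})) a_i a_j, {a_i, b_j} = 0, and {b_i, b_j} = (∑_{k=1}^{m} (δ_{i,j−3k} − δ_{i,j+3k})) b_i b_j. Then the rational functions x_i := a_{i−2}/(b_{i−2} b_{i−1}) and y_i := −b_{i−1}/(a_{i−2} a_{i−1}) satisfy: {x_i, x_{i+1}} = −x_i x_{i+1}; {y_i, y_{i+1}} = y_i y_{i+1}; {x_i, y_j} = 0 for all i, j; and {x_i, x_j} = 0 and {y_i, y_j} = 0 whenever j ∉ {i−1, i, i+1}. That is, in the (a, b)-coordinates the invariant Poisson bracket of the pentagram map takes the stated form. -/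
open MvPolynomial

/-- The field of rational functions in the variables `a_i, b_i`
(`Sum.inl i ↦ a_i`, `Sum.inr i ↦ b_i`). -/
abbrev ABField (n : ℕ) : Type :=
  FractionRing (MvPolynomial (ZMod n ⊕ ZMod n) ℝ)

/-- The coordinate `a_i` as a rational function. -/
noncomputable def aR {n : ℕ} (i : ZMod n) : ABField n :=
  algebraMap (MvPolynomial (ZMod n ⊕ ZMod n) ℝ) (ABField n) (X (Sum.inl i))

/-- The coordinate `b_i` as a rational function. -/
noncomputable def bR {n : ℕ} (i : ZMod n) : ABField n :=
  algebraMap (MvPolynomial (ZMod n ⊕ ZMod n) ℝ) (ABField n) (X (Sum.inr i))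

/-- coefficient sum -/
noncomputable def Scoef (m n : ℕ) (e : ZMod n) : ABField n :=
  ∑ k ∈ Finset.Icc 1 m,
    ((if e = ((3 * k : ℕ) : ZMod n) then (1 : ABField n) else 0) -
      (if e = -((3 * k : ℕ) : ZMod n) then 1 else 0))

section core
variable {m n : ℕ} (hm : 1 ≤ m) (hn : n = 3 * m + 1 ∨ n = 3 * m + 2)

include hn in
lemma cast_eq_cast_iff (a b : ℕ) (ha : a < n) (hb : b < n) :
    ((a : ZMod n) = (b : ZMod n)) ↔ a = b := by
  have : NeZero n := ⟨by omega⟩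
  constructor
  · intro h
    have := congrArg ZMod.val h
    rwa [ZMod.val_cast_of_lt ha, ZMod.val_cast_of_lt hb] at this
  · rintro rfl; rfl

include hn in
lemma cast_eq_neg_iff (a b : ℕ) (ha : a < n) (hb : b < n) (hab : 0 < a + b) :
    ((a : ZMod n) = -(b : ZMod n)) ↔ a + b = n := by
  have : NeZero n := ⟨by omega⟩
  rw [eq_neg_iff_add_eq_zero, ← Nat.cast_add, ZMod.natCast_eq_zero_iff]
  constructor
  · rintro ⟨c, hc⟩
    rcases Nat.lt_or_ge c 2 with h | h
    · interval_cases c <;> omega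
    · have h2 : n * 2 ≤ n * c := Nat.mul_le_mul_left n h
      have h3 : n * 2 ≤ a + b := hc ▸ h2
      omega
  · intro h; exact ⟨1, by omega⟩

include hm hn in
lemma Scoef_pos (s : ℕ) (h3 : 3 ∣ s) (h1 : 3 ≤ s) (h2 : s ≤ 3 * m) :
    Scoef m n ((s : ℕ) : ZMod n) = 1 := by
  obtain ⟨t, rfl⟩ := h3
  have ht : t ∈ Finset.Icc 1 m := by simp; omega
  rw [Scoef]
  rw [Finset.sum_congr rfl (g := fun k => if k = t then (1:ABField n) else 0) ?_]
  · rw [Finset.sum_ite_eq' _ t (fun _ => (1:ABField n))]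
    simp [ht]
  · intro k hk
    simp only [Finset.mem_Icc] at hk
    have e1 : (((3*t:ℕ)) : ZMod n) = ((3*k:ℕ) : ZMod n) ↔ k = t := by
      rw [cast_eq_cast_iff hn _ _ (by omega) (by omega)]; omega
    have e2 : (((3*t:ℕ)) : ZMod n) = -((3*k:ℕ) : ZMod n) ↔ False := by
      rw [cast_eq_neg_iff hn _ _ (by omega) (by omega) (by omega)]
      constructor; · intro h; omega
      · exact False.elim
    simp only [e1, e2, if_false, sub_zero]

include hm hn in
lemma Scoef_neg (s : ℕ) (hsn : s < n) (h3 : 3 ∣ (n - s)) (h1 : 3 ≤ n - s) (h2 : n - s ≤ 3 * m) :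
    Scoef m n ((s : ℕ) : ZMod n) = -1 := by
  obtain ⟨t, ht'⟩ := h3
  have ht : t ∈ Finset.Icc 1 m := by simp; omega
  rw [Scoef]
  rw [Finset.sum_congr rfl (g := fun k => if k = t then (0 - 1:ABField n) else 0) ?_]
  · rw [Finset.sum_ite_eq' _ t (fun _ => (0-1:ABField n))]
    simp [ht]
  · intro k hk
    simp only [Finset.mem_Icc] at hk
    have e1 : ((s:ℕ) : ZMod n) = ((3*k:ℕ) : ZMod n) ↔ False := by
      rw [cast_eq_cast_iff hn _ _ (by omega) (by omega)]
      constructor; · intro h; omega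
      · exact False.elim
    have e2 : ((s:ℕ) : ZMod n) = -((3*k:ℕ) : ZMod n) ↔ k = t := by
      rw [cast_eq_neg_iff hn _ _ (by omega) (by omega) (by omega)]; omega
    simp only [e1, e2, if_false, zero_sub]
    split <;> norm_num

include hm hn in
lemma Scoef_zero (s : ℕ) (hsn : s < n)
    (h : s = 0 ∨ (¬ 3 ∣ s ∧ ¬ 3 ∣ (n - s))) :
    Scoef m n ((s : ℕ) : ZMod n) = 0 := by
  rw [Scoef]
  apply Finset.sum_eq_zero
  intro k hk
  simp only [Finset.mem_Icc] at hk
  have e1 : ((s:ℕ) : ZMod n) = ((3*k:ℕ) : ZMod n) ↔ False := by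
    rw [cast_eq_cast_iff hn _ _ (by omega) (by omega)]
    constructor; · intro h; omega
    · exact False.elim
  have e2 : ((s:ℕ) : ZMod n) = -((3*k:ℕ) : ZMod n) ↔ False := by
    rw [cast_eq_neg_iff hn _ _ (by omega) (by omega) (by omega)]
    constructor; · intro h; omega
    · exact False.elim
  simp only [e1, e2, if_false]
  ring



include hm hn in
lemma Scoef_val (s : ℕ) (hs : s < n) :
    Scoef m n ((s : ℕ) : ZMod n) =
      (if 3 ∣ s ∧ 3 ≤ s then (1 : ABField n) else 0) -
      (if 3 ∣ (n - s) ∧ 1 ≤ s then 1 else 0) := by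
  by_cases hA : 3 ∣ s ∧ 3 ≤ s
  · have hB : ¬ (3 ∣ (n - s) ∧ 1 ≤ s) := by rcases hn with h | h <;> omega
    rw [Scoef_pos hm hn s hA.1 hA.2 (by rcases hn with h | h <;> omega)]
    simp [hA, hB]
  · by_cases hB : 3 ∣ (n - s) ∧ 1 ≤ s
    · rw [Scoef_neg hm hn s hs hB.1 (by rcases hn with h | h <;> omega)
        (by rcases hn with h | h <;> omega)]
      simp [hA, hB]
    · rw [Scoef_zero hm hn s hs (by rcases hn with h | h <;> omega)]
      simp [hA, hB]

include hm hn in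
set_option maxHeartbeats 1000000 in
lemma window_zero (d : ZMod n) (h1 : d ≠ -1) (h2 : d ≠ 0) (h3 : d ≠ 1) :
    Scoef m n (d - 1) + Scoef m n d + Scoef m n (d + 1) = 0 := by
  have hNZ : NeZero n := ⟨by omega⟩
  have hn4 : 4 ≤ n := by omega
  obtain ⟨r, hr, hd⟩ : ∃ r, r < n ∧ ((r : ℕ) : ZMod n) = d :=
    ⟨d.val, ZMod.val_lt d, ZMod.natCast_rightInverse d⟩
  have hr0 : r ≠ 0 := by
    intro h; apply h2; rw [← hd, h]; simp
  have hr1 : r ≠ 1 := by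
    intro h; apply h3; rw [← hd, h]; simp
  have hrn : r ≠ n - 1 := by
    intro h; apply h1; rw [← hd, h, Nat.cast_sub (by omega), ZMod.natCast_self]; simp
  have e1 : d - 1 = (((r - 1 : ℕ)) : ZMod n) := by
    rw [Nat.cast_sub (by omega), hd]; simp
  have e3 : d + 1 = (((r + 1 : ℕ)) : ZMod n) := by
    rw [Nat.cast_add, hd]; simp
  rw [e1, e3, ← hd,
    Scoef_val hm hn (r - 1) (by omega), Scoef_val hm hn r hr,
    Scoef_val hm hn (r + 1) (by omega)]
  rcases hn with h | h
  all_goals split_ifs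
  all_goals first | (exfalso; omega) | norm_num

include hm hn in
set_option maxHeartbeats 1000000 in
lemma window_one :
    Scoef m n (-1 - 1) + Scoef m n (-1) + Scoef m n (-1 + 1) = 1 := by
  have hNZ : NeZero n := ⟨by omega⟩
  have e1 : (-1 - 1 : ZMod n) = ((n - 2 : ℕ) : ZMod n) := by
    rw [Nat.cast_sub (by omega), ZMod.natCast_self]; push_cast; ring
  have e2 : (-1 : ZMod n) = ((n - 1 : ℕ) : ZMod n) := by
    rw [Nat.cast_sub (by omega), ZMod.natCast_self]; push_cast; ring
  have e3 : (-1 + 1 : ZMod n) = ((0 : ℕ) : ZMod n) := by simp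
  rw [e3, e1, e2,
    Scoef_val hm hn (n - 2) (by omega), Scoef_val hm hn (n - 1) (by omega),
    Scoef_val hm hn 0 (by omega)]
  rcases hn with h | h
  all_goals split_ifs
  all_goals first | (exfalso; omega) | norm_num

end core


set_option maxHeartbeats 1600000 in
/-- Proposition 4.11: in the `(a,b)`-coordinates, the skew-symmetric biderivation
with `{a_i, a_j} = (∑_{k=1}^m (δ_{i,j+3k} - δ_{i,j-3k})) a_i a_j`, `{a_i, b_j} = 0`,
`{b_i, b_j} = (∑_{k=1}^m (δ_{i,j-3k} - δ_{i,j+3k})) b_i b_j` induces on the corner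
invariants `x_i = a_{i-2}/(b_{i-2} b_{i-1})`, `y_i = -b_{i-1}/(a_{i-2} a_{i-1})` the
bracket `{x_i, x_{i+1}} = -x_i x_{i+1}`, `{y_i, y_{i+1}} = y_i y_{i+1}`, all other
brackets of coordinates vanishing. -/
theorem stmt_17 (m : ℕ) (hm : 1 ≤ m) (n : ℕ)
    (hn : n = 3 * m + 1 ∨ n = 3 * m + 2)
    (B : ABField n → ABField n → ABField n)
    (haddl : ∀ f g h : ABField n, B (f + g) h = B f h + B g h)
    (hskew : ∀ f g : ABField n, B f g = -B g f)
    (hleib : ∀ f g h : ABField n, B f (g * h) = g * B f h + h * B f g)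
    (haa : ∀ i j : ZMod n, B (aR i) (aR j) =
      (∑ k ∈ Finset.Icc 1 m,
        ((if i = j + ((3 * k : ℕ) : ZMod n) then (1 : ABField n) else 0) -
          (if i = j - ((3 * k : ℕ) : ZMod n) then 1 else 0))) * (aR i * aR j))
    (hab : ∀ i j : ZMod n, B (aR i) (bR j) = 0)
    (hbb : ∀ i j : ZMod n, B (bR i) (bR j) =
      (∑ k ∈ Finset.Icc 1 m,
        ((if i = j - ((3 * k : ℕ) : ZMod n) then (1 : ABField n) else 0) -
          (if i = j + ((3 * k : ℕ) : ZMod n) then 1 else 0))) * (bR i * bR j))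
    (x y : ZMod n → ABField n)
    (hx : ∀ i, x i = aR (i - 2) / (bR (i - 2) * bR (i - 1)))
    (hy : ∀ i, y i = -bR (i - 1) / (aR (i - 2) * aR (i - 1))) :
    ∀ i j : ZMod n,
      B (x i) (x (i + 1)) = -(x i * x (i + 1)) ∧
      B (y i) (y (i + 1)) = y i * y (i + 1) ∧
      B (x i) (y j) = 0 ∧
      (j ≠ i - 1 → j ≠ i → j ≠ i + 1 → B (x i) (x j) = 0 ∧ B (y i) (y j) = 0) := by
  -- nonvanishing of generators
  have ha : ∀ p : ZMod n, aR p ≠ 0 := fun p h =>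
    MvPolynomial.X_ne_zero _ (IsFractionRing.to_map_eq_zero_iff.mp h)
  have hb : ∀ p : ZMod n, bR p ≠ 0 := fun p h =>
    MvPolynomial.X_ne_zero _ (IsFractionRing.to_map_eq_zero_iff.mp h)
  -- basic bracket identities
  have hBone : ∀ f, B f 1 = 0 := by
    intro f
    have h2 : B f 1 = B f 1 + B f 1 := by
      have := hleib f 1 1; simpa using this
    have h3 : B f 1 + 0 = B f 1 + B f 1 := by rw [add_zero]; exact h2
    exact (add_left_cancel h3).symm
  have hB0l : ∀ g, B 0 g = 0 := by
    intro g
    have h2 : B 0 g = B 0 g + B 0 g := by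
      have := haddl 0 0 g; simpa using this
    have h3 : B 0 g + 0 = B 0 g + B 0 g := by rw [add_zero]; exact h2
    exact (add_left_cancel h3).symm
  have hnegl : ∀ f g, B (-f) g = -B f g := by
    intro f g
    have h2 := haddl f (-f) g
    simp only [add_neg_cancel, hB0l] at h2
    linear_combination -h2
  have hinv : ∀ f g, g ≠ 0 → B f g⁻¹ = -(g⁻¹ * (g⁻¹ * B f g)) := by
    intro f g hg
    have h := hleib f g g⁻¹
    rw [mul_inv_cancel₀ hg, hBone f] at h
    apply mul_left_cancel₀ hg
    have h1 : g * B f g⁻¹ = -(g⁻¹ * B f g) := by linear_combination -h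
    rw [h1]
    field_simp
  -- P-combinators
  have Pmulr : ∀ f g h c d, B f g = c * (f * g) → B f h = d * (f * h) →
      B f (g * h) = (c + d) * (f * (g * h)) := by
    intro f g h c d h1 h2
    rw [hleib, h1, h2]; ring
  have Pinvr : ∀ f g c, g ≠ 0 → B f g = c * (f * g) →
      B f g⁻¹ = (-c) * (f * g⁻¹) := by
    intro f g c hg h1
    rw [hinv f g hg, h1]
    field_simp
  have Pskew : ∀ f g c, B f g = c * (f * g) → B g f = (-c) * (g * f) := by
    intro f g c h1
    rw [hskew g f, h1]; ring
  have Pmull : ∀ f g h c d, B f h = c * (f * h) → B g h = d * (g * h) →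
      B (f * g) h = (c + d) * ((f * g) * h) := by
    intro f g h c d h1 h2
    have := Pmulr h f g (-c) (-d) (Pskew f h c h1) (Pskew g h d h2)
    have h3 := Pskew h (f * g) (-c + -d) this
    rw [h3]; ring
  have Pinvl : ∀ f g c, f ≠ 0 → B f g = c * (f * g) →
      B f⁻¹ g = (-c) * (f⁻¹ * g) := by
    intro f g c hf h1
    rw [hskew, Pinvr g f (-c) hf (Pskew f g c h1)]; ring
  have Pnegl : ∀ f g c, B f g = c * (f * g) → B (-f) g = c * ((-f) * g) := by
    intro f g c h1
    rw [hnegl, h1]; ring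
  have Pnegr : ∀ f g c, B f g = c * (f * g) → B f (-g) = c * (f * (-g)) := by
    intro f g c h1
    rw [hskew, Pnegl g f (-c) (Pskew f g c h1)]; ring
  -- generator brackets in difference form
  have iff1 : ∀ p p' c : ZMod n, (p = p' + c) ↔ (p - p' = c) := by
    intro p p' c
    exact (sub_eq_iff_eq_add' (a := p) (b := p') (c := c)).symm
  have iff2 : ∀ p p' c : ZMod n, (p = p' - c) ↔ (p - p' = -c) := by
    intro p p' c
    rw [sub_eq_iff_eq_add', ← sub_eq_add_neg]
  have hSaa : ∀ p p' : ZMod n, B (aR p) (aR p') =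
      Scoef m n (p - p') * (aR p * aR p') := by
    intro p p'
    rw [haa]
    congr 1
    rw [Scoef]
    apply Finset.sum_congr rfl
    intro k _
    congr 1
    · exact if_congr (iff1 p p' _) rfl rfl
    · exact if_congr (iff2 p p' _) rfl rfl
  have hSbb : ∀ q q' : ZMod n, B (bR q) (bR q') =
      (-Scoef m n (q - q')) * (bR q * bR q') := by
    intro q q'
    rw [hbb]
    congr 1
    rw [Scoef, ← Finset.sum_neg_distrib]
    apply Finset.sum_congr rfl
    intro k _
    rw [neg_sub]
    congr 1
    · exact if_congr (iff2 q q' _) rfl rfl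
    · exact if_congr (iff1 q q' _) rfl rfl
  have hZab : ∀ p q : ZMod n, B (aR p) (bR q) = 0 * (aR p * bR q) := by
    intro p q; rw [hab]; ring
  have hZba : ∀ q p : ZMod n, B (bR q) (aR p) = 0 * (bR q * aR p) := by
    intro q p
    have := Pskew (aR p) (bR q) 0 (hZab p q)
    rw [this]; ring
  -- main product computations
  have hxx : ∀ p q r p' q' r' : ZMod n,
      B (aR p * (bR q * bR r)⁻¹) (aR p' * (bR q' * bR r')⁻¹)
        = (Scoef m n (p - p') - Scoef m n (q - q') - Scoef m n (q - r')
            - Scoef m n (r - q') - Scoef m n (r - r'))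
          * ((aR p * (bR q * bR r)⁻¹) * (aR p' * (bR q' * bR r')⁻¹)) := by
    intro p q r p' q' r'
    have hbb' : bR q' * bR r' ≠ 0 := mul_ne_zero (hb q') (hb r')
    have ca : B (aR p) (aR p' * (bR q' * bR r')⁻¹)
        = (Scoef m n (p - p') + -(0 + 0)) * (aR p * (aR p' * (bR q' * bR r')⁻¹)) :=
      Pmulr _ _ _ _ _ (hSaa p p')
        (Pinvr _ _ _ hbb' (Pmulr _ _ _ _ _ (hZab p q') (hZab p r')))
    have cq : B (bR q) (aR p' * (bR q' * bR r')⁻¹)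
        = (0 + -(-Scoef m n (q - q') + -Scoef m n (q - r')))
          * (bR q * (aR p' * (bR q' * bR r')⁻¹)) :=
      Pmulr _ _ _ _ _ (hZba q p')
        (Pinvr _ _ _ hbb' (Pmulr _ _ _ _ _ (hSbb q q') (hSbb q r')))
    have cr : B (bR r) (aR p' * (bR q' * bR r')⁻¹)
        = (0 + -(-Scoef m n (r - q') + -Scoef m n (r - r')))
          * (bR r * (aR p' * (bR q' * bR r')⁻¹)) :=
      Pmulr _ _ _ _ _ (hZba r p')
        (Pinvr _ _ _ hbb' (Pmulr _ _ _ _ _ (hSbb r q') (hSbb r r')))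
    have cqr := Pmull _ _ _ _ _ cq cr
    have cinv := Pinvl _ _ _ (mul_ne_zero (hb q) (hb r)) cqr
    have cfin := Pmull _ _ _ _ _ ca cinv
    rw [cfin]; ring
  have hyy : ∀ p q r p' q' r' : ZMod n,
      B (-bR q * (aR p * aR r)⁻¹) (-bR q' * (aR p' * aR r')⁻¹)
        = (Scoef m n (p - p') + Scoef m n (p - r') + Scoef m n (r - p')
            + Scoef m n (r - r') - Scoef m n (q - q'))
          * ((-bR q * (aR p * aR r)⁻¹) * (-bR q' * (aR p' * aR r')⁻¹)) := by
    intro p q r p' q' r'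
    have haa' : aR p' * aR r' ≠ 0 := mul_ne_zero (ha p') (ha r')
    have cq : B (bR q) (-bR q' * (aR p' * aR r')⁻¹)
        = (-Scoef m n (q - q') + -(0 + 0)) * (bR q * (-bR q' * (aR p' * aR r')⁻¹)) :=
      Pmulr _ _ _ _ _ (Pnegr _ _ _ (hSbb q q'))
        (Pinvr _ _ _ haa' (Pmulr _ _ _ _ _ (hZba q p') (hZba q r')))
    have cp : B (aR p) (-bR q' * (aR p' * aR r')⁻¹)
        = (0 + -(Scoef m n (p - p') + Scoef m n (p - r')))
          * (aR p * (-bR q' * (aR p' * aR r')⁻¹)) :=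
      Pmulr _ _ _ _ _ (Pnegr _ _ _ (hZab p q'))
        (Pinvr _ _ _ haa' (Pmulr _ _ _ _ _ (hSaa p p') (hSaa p r')))
    have cr : B (aR r) (-bR q' * (aR p' * aR r')⁻¹)
        = (0 + -(Scoef m n (r - p') + Scoef m n (r - r')))
          * (aR r * (-bR q' * (aR p' * aR r')⁻¹)) :=
      Pmulr _ _ _ _ _ (Pnegr _ _ _ (hZab r q'))
        (Pinvr _ _ _ haa' (Pmulr _ _ _ _ _ (hSaa r p') (hSaa r r')))
    have cpr := Pmull _ _ _ _ _ cp cr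
    have cinv := Pinvl _ _ _ (mul_ne_zero (ha p) (ha r)) cpr
    have cneg := Pnegl _ _ _ cq
    have cfin := Pmull _ _ _ _ _ cneg cinv
    rw [cfin]; ring
  have hxy : ∀ p q r p' q' r' : ZMod n,
      B (aR p * (bR q * bR r)⁻¹) (-bR q' * (aR p' * aR r')⁻¹)
        = (-Scoef m n (p - p') - Scoef m n (p - r') + Scoef m n (q - q')
            + Scoef m n (r - q'))
          * ((aR p * (bR q * bR r)⁻¹) * (-bR q' * (aR p' * aR r')⁻¹)) := by
    intro p q r p' q' r'
    have haa' : aR p' * aR r' ≠ 0 := mul_ne_zero (ha p') (ha r')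
    have cp : B (aR p) (-bR q' * (aR p' * aR r')⁻¹)
        = (0 + -(Scoef m n (p - p') + Scoef m n (p - r')))
          * (aR p * (-bR q' * (aR p' * aR r')⁻¹)) :=
      Pmulr _ _ _ _ _ (Pnegr _ _ _ (hZab p q'))
        (Pinvr _ _ _ haa' (Pmulr _ _ _ _ _ (hSaa p p') (hSaa p r')))
    have cq : B (bR q) (-bR q' * (aR p' * aR r')⁻¹)
        = (-Scoef m n (q - q') + -(0 + 0)) * (bR q * (-bR q' * (aR p' * aR r')⁻¹)) :=
      Pmulr _ _ _ _ _ (Pnegr _ _ _ (hSbb q q'))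
        (Pinvr _ _ _ haa' (Pmulr _ _ _ _ _ (hZba q p') (hZba q r')))
    have cr : B (bR r) (-bR q' * (aR p' * aR r')⁻¹)
        = (-Scoef m n (r - q') + -(0 + 0)) * (bR r * (-bR q' * (aR p' * aR r')⁻¹)) :=
      Pmulr _ _ _ _ _ (Pnegr _ _ _ (hSbb r q'))
        (Pinvr _ _ _ haa' (Pmulr _ _ _ _ _ (hZba r p') (hZba r r')))
    have cqr := Pmull _ _ _ _ _ cq cr
    have cinv := Pinvl _ _ _ (mul_ne_zero (hb q) (hb r)) cqr
    have cfin := Pmull _ _ _ _ _ cp cinv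
    rw [cfin]; ring
  intro i j
  have hwin1 := window_one hm hn
  refine ⟨?_, ?_, ?_, ?_⟩
  · -- {x i, x (i+1)} = - x i x (i+1)
    rw [hx i, hx (i + 1), div_eq_mul_inv, div_eq_mul_inv, hxx]
    have e1 : (i - 2) - (i + 1 - 2) = (-1 : ZMod n) := by ring
    have e2 : (i - 2) - (i + 1 - 1) = (-1 - 1 : ZMod n) := by ring
    have e3 : (i - 1) - (i + 1 - 2) = (-1 + 1 : ZMod n) := by ring
    have e4 : (i - 1) - (i + 1 - 1) = (-1 : ZMod n) := by ring
    rw [e1, e2, e3, e4]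
    linear_combination (-((aR (i - 2) * (bR (i - 2) * bR (i - 1))⁻¹) *
      (aR (i + 1 - 2) * (bR (i + 1 - 2) * bR (i + 1 - 1))⁻¹))) * hwin1
  · -- {y i, y (i+1)} = y i y (i+1)
    rw [hy i, hy (i + 1), div_eq_mul_inv, div_eq_mul_inv, hyy]
    have e1 : (i - 2) - (i + 1 - 2) = (-1 : ZMod n) := by ring
    have e2 : (i - 2) - (i + 1 - 1) = (-1 - 1 : ZMod n) := by ring
    have e3 : (i - 1) - (i + 1 - 2) = (-1 + 1 : ZMod n) := by ring
    have e4 : (i - 1) - (i + 1 - 1) = (-1 : ZMod n) := by ring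
    have e5 : (i - 1) - (i + 1 - 1) = (-1 : ZMod n) := by ring
    rw [e1, e2, e3, e4]
    linear_combination ((-bR (i - 1) * (aR (i - 2) * aR (i - 1))⁻¹) *
      (-bR (i + 1 - 1) * (aR (i + 1 - 2) * aR (i + 1 - 1))⁻¹)) * hwin1
  · -- {x i, y j} = 0
    rw [hx i, hy j, div_eq_mul_inv, div_eq_mul_inv, hxy]
    have e1 : (i - 2) - (j - 2) = i - j := by ring
    have e2 : (i - 2) - (j - 1) = i - j - 1 := by ring
    have e3 : (i - 1) - (j - 1) = i - j := by ring
    rw [e1, e2, e3]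
    ring
  · -- far-apart brackets vanish
    intro hj1 hj2 hj3
    have hd1 : i - j ≠ -1 := by
      intro h; exact hj3 (by linear_combination -h)
    have hd2 : i - j ≠ 0 := by
      intro h; exact hj2 (by linear_combination -h)
    have hd3 : i - j ≠ 1 := by
      intro h; exact hj1 (by linear_combination -h)
    have hwin0 := window_zero hm hn (i - j) hd1 hd2 hd3
    constructor
    · rw [hx i, hx j, div_eq_mul_inv, div_eq_mul_inv, hxx]
      have e1 : (i - 2) - (j - 2) = i - j := by ring
      have e2 : (i - 2) - (j - 1) = i - j - 1 := by ring
      have e3 : (i - 1) - (j - 2) = i - j + 1 := by ring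
      have e4 : (i - 1) - (j - 1) = i - j := by ring
      rw [e1, e2, e3, e4]
      linear_combination (-((aR (i - 2) * (bR (i - 2) * bR (i - 1))⁻¹) *
        (aR (j - 2) * (bR (j - 2) * bR (j - 1))⁻¹))) * hwin0
    · rw [hy i, hy j, div_eq_mul_inv, div_eq_mul_inv, hyy]
      have e1 : (i - 2) - (j - 2) = i - j := by ring
      have e2 : (i - 2) - (j - 1) = i - j - 1 := by ring
      have e3 : (i - 1) - (j - 2) = i - j + 1 := by ring
      have e4 : (i - 1) - (j - 1) = i - j := by ring
      rw [e1, e2, e3, e4]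
      linear_combination ((-bR (i - 1) * (aR (i - 2) * aR (i - 1))⁻¹) *
        (-bR (j - 1) * (aR (j - 2) * aR (j - 1))⁻¹)) * hwin0
end

section
/- Let n = 3m with m ≥ 1, let u, v be nonzero real numbers, and let a, b : ZMod n → ℝ. Define a', b' : ZMod n → ℝ by a'_{3j} = u²v·a_{3j}, a'_{3j+1} = (v/u)·a_{3j+1}, a'_{3j+2} = a_{3j+2}/(uv²), and b'_{3j} = (u/v)·b_{3j}, b'_{3j+1} = uv²·b_{3j+1}, b'_{3j+2} = b_{3j+2}/(u²v), for 0 ≤ j < m. Then the matrix products N(a'_0, b'_0)·N(a'_1, b'_1) ⋯ N(a'_{n−1}, b'_{n−1}) and N(a_0, b_0)·N(a_1, b_1) ⋯ N(a_{n−1}, b_{n−1}) are conjugate in GL(3, ℝ); in particular they have equal traces, and their inverses have equal traces. (Hence the trace of the monodromy matrix, and each of its weighted-homogeneous components I_j, J_j, is invariant under the ℝ*×ℝ* action arising from the ambiguity of the lift when n is divisible by 3.) -/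
/-- The matrix `N(α, β)` with rows `(0,0,1)`, `(1,0,β)`, `(0,1,α)`. -/
noncomputable def Nmat (α β : ℝ) : Matrix (Fin 3) (Fin 3) ℝ :=
  !![0, 0, 1; 1, 0, β; 0, 1, α]

namespace Stmt18Aux

noncomputable def D0 (u v : ℝ) : Matrix (Fin 3) (Fin 3) ℝ :=
  !![1,0,0; 0,u/v,0; 0,0,u^2*v]
noncomputable def D1 (u v : ℝ) : Matrix (Fin 3) (Fin 3) ℝ :=
  !![u/v,0,0; 0,u^2*v,0; 0,0,1]
noncomputable def D2 (u v : ℝ) : Matrix (Fin 3) (Fin 3) ℝ :=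
  !![u^2*v,0,0; 0,1,0; 0,0,u/v]

lemma step0 (u v α β : ℝ) :
    Nmat (u^2*v*α) ((u/v)*β) * D1 u v = D0 u v * Nmat α β := by
  ext i j
  fin_cases i <;> fin_cases j <;>
    · simp [Nmat, D0, D1, Matrix.mul_apply, Fin.sum_univ_three, Matrix.vecHead, Matrix.vecTail]
      try field_simp
      try ring

lemma step1 (u v α β : ℝ) (hu : u ≠ 0) (hv : v ≠ 0) :
    Nmat ((v/u)*α) (u*v^2*β) * D2 u v = D1 u v * Nmat α β := by
  ext i j
  fin_cases i <;> fin_cases j <;>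
    · simp [Nmat, D1, D2, Matrix.mul_apply, Fin.sum_univ_three, Matrix.vecHead, Matrix.vecTail]
      try field_simp
      try ring

lemma step2 (u v α β : ℝ) (hu : u ≠ 0) (hv : v ≠ 0) :
    Nmat (α/(u*v^2)) (β/(u^2*v)) * D0 u v = D2 u v * Nmat α β := by
  ext i j
  fin_cases i <;> fin_cases j <;>
    · simp [Nmat, D0, D2, Matrix.mul_apply, Fin.sum_univ_three, Matrix.vecHead, Matrix.vecTail]
      try field_simp
      try ring

lemma detD0 (u v : ℝ) (hu : u ≠ 0) (hv : v ≠ 0) : IsUnit (D0 u v).det := by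
  have : (D0 u v).det = u ^ 3 := by
    simp [D0, Matrix.det_fin_three]
    field_simp
  rw [this]
  exact (isUnit_iff_ne_zero.2 (pow_ne_zero _ hu))

lemma telescope {R : Type*} [Monoid R] (Q' N0' N1' N2' Q N0 N1 N2 P E1 E2 : R)
    (h0 : N0' * E1 = P * N0) (h1 : N1' * E2 = E1 * N1) (h2 : N2' * P = E2 * N2)
    (hQ : Q' * P = P * Q) :
    Q' * N0' * N1' * N2' * P = P * (Q * N0 * N1 * N2) := by
  simp only [mul_assoc]
  rw [h2, ← mul_assoc N1' E2, h1, mul_assoc E1, ← mul_assoc N0' E1, h0,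
    mul_assoc P N0, ← mul_assoc Q' P, hQ, mul_assoc]

end Stmt18Aux

open Stmt18Aux in
/-- Lemma 5.4: for `n = 3m`, the `ℝ* × ℝ*`-action
`a ↦ a'`, `b ↦ b'` (depending on the residue mod 3) conjugates the monodromy
matrix `N(a_0,b_0) ⋯ N(a_{n-1},b_{n-1})`; in particular the traces of the
monodromies, and of their inverses, are equal. -/
theorem stmt_18 (m : ℕ) (hm : 1 ≤ m) (n : ℕ) (hn : n = 3 * m)
    (u v : ℝ) (hu : u ≠ 0) (hv : v ≠ 0)
    (a b a' b' : ZMod n → ℝ)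
    (hab' : ∀ j : ℕ, j < m →
      a' ((3 * j : ℕ) : ZMod n) = u ^ 2 * v * a ((3 * j : ℕ) : ZMod n) ∧
      a' ((3 * j + 1 : ℕ) : ZMod n) = (v / u) * a ((3 * j + 1 : ℕ) : ZMod n) ∧
      a' ((3 * j + 2 : ℕ) : ZMod n) = a ((3 * j + 2 : ℕ) : ZMod n) / (u * v ^ 2) ∧
      b' ((3 * j : ℕ) : ZMod n) = (u / v) * b ((3 * j : ℕ) : ZMod n) ∧
      b' ((3 * j + 1 : ℕ) : ZMod n) = u * v ^ 2 * b ((3 * j + 1 : ℕ) : ZMod n) ∧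
      b' ((3 * j + 2 : ℕ) : ZMod n) = b ((3 * j + 2 : ℕ) : ZMod n) / (u ^ 2 * v))
    (M M' : Matrix (Fin 3) (Fin 3) ℝ)
    (hM : M = (((List.range n).map fun i => Nmat (a (i : ZMod n)) (b (i : ZMod n))).prod))
    (hM' : M' = (((List.range n).map fun i => Nmat (a' (i : ZMod n)) (b' (i : ZMod n))).prod)) :
    ∃ P : Matrix (Fin 3) (Fin 3) ℝ, IsUnit P.det ∧
      M' = P * M * P⁻¹ ∧
      M'.trace = M.trace ∧ M'⁻¹.trace = M⁻¹.trace := by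
  set P := D0 u v with hP
  have hdet : IsUnit P.det := detD0 u v hu hv
  have key : ∀ k, k ≤ m →
      (((List.range (3*k)).map fun i => Nmat (a' (i : ZMod n)) (b' (i : ZMod n))).prod) * P
        = P * (((List.range (3*k)).map fun i => Nmat (a (i : ZMod n)) (b (i : ZMod n))).prod) := by
    intro k
    induction k with
    | zero => intro _; simp
    | succ k ih =>
      intro hk
      have hk' : k < m := hk
      have h := hab' k hk'
      have e3 : 3 * (k + 1) = (3 * k + 1 + 1) + 1 := by ring
      rw [e3, List.range_succ, List.range_succ, List.range_succ]
      simp only [List.pure_def, List.bind_eq_flatMap, List.flatMap_append, List.flatMap_cons,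
        List.flatMap_nil, List.append_nil, List.nil_append, List.map_append, List.map_cons,
        List.map_nil, List.prod_append, List.prod_cons, List.prod_nil, mul_one] at ih ⊢
      have h2 : Nmat (a' ((3*k+2 : ℕ) : ZMod n)) (b' ((3*k+2 : ℕ) : ZMod n)) * P
          = D2 u v * Nmat (a ((3*k+2 : ℕ) : ZMod n)) (b ((3*k+2 : ℕ) : ZMod n)) := by
        rw [h.2.2.1, h.2.2.2.2.2, hP]; exact step2 u v _ _ hu hv
      have h1 : Nmat (a' ((3*k+1 : ℕ) : ZMod n)) (b' ((3*k+1 : ℕ) : ZMod n)) * D2 u v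
          = D1 u v * Nmat (a ((3*k+1 : ℕ) : ZMod n)) (b ((3*k+1 : ℕ) : ZMod n)) := by
        rw [h.2.1, h.2.2.2.2.1]; exact step1 u v _ _ hu hv
      have h0 : Nmat (a' ((3*k : ℕ) : ZMod n)) (b' ((3*k : ℕ) : ZMod n)) * D1 u v
          = P * Nmat (a ((3*k : ℕ) : ZMod n)) (b ((3*k : ℕ) : ZMod n)) := by
        rw [h.1, h.2.2.2.1, hP]; exact step0 u v _ _
      have := telescope _ _ _ _ _ _ _ _ _ _ _ h0 h1 h2 (ih (le_of_lt hk'))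
      rw [this]
  have hkey := key m le_rfl
  rw [← hn, ← hM', ← hM] at hkey
  have hPinv : P * P⁻¹ = 1 := Matrix.mul_nonsing_inv P hdet
  have hPinv' : P⁻¹ * P = 1 := Matrix.nonsing_inv_mul P hdet
  have hconj : M' = P * M * P⁻¹ := by
    calc M' = M' * (P * P⁻¹) := by rw [hPinv, mul_one]
      _ = (M' * P) * P⁻¹ := by rw [mul_assoc]
      _ = P * M * P⁻¹ := by rw [hkey]
  refine ⟨P, hdet, hconj, ?_, ?_⟩
  · rw [hconj, Matrix.trace_mul_comm, ← mul_assoc, hPinv', one_mul]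
  · rw [hconj, Matrix.mul_inv_rev, Matrix.mul_inv_rev,
      Matrix.nonsing_inv_nonsing_inv P hdet, Matrix.trace_mul_comm, mul_assoc, hPinv', mul_one]
end

section
/- Let n ≥ 1 and a, b : Fin n → ℝ. For s ≠ 0 set A(s) := N(s·a_0, s⁻¹·b_0) · N(s·a_1, s⁻¹·b_1) ⋯ N(s·a_{n−1}, s⁻¹·b_{n−1}), and let F(s) := tr A(s) and G(s) := tr adj A(s), where adj denotes the adjugate matrix (since det A(s) = 1, adj A(s) = A(s)⁻¹). Suppose A(1) is the identity matrix (i.e. the twisted n-gon is closed). Then F(1) = 3, G(1) = 3, F′(1) = 0, G′(1) = 0, and F″(1) = G″(1). (These five identities are equivalent to the paper's relations for closed polygons: ∑_j I_j = ∑_j J_j = 3, ∑_j w(j) I_j = ∑_j w(j) J_j = 0, and ∑_j w(j)² (I_j − J_j) = 0, where I_j and J_j are the weighted-homogeneous components of the traces of the monodromy and of its inverse, of weights w(j) and −w(j), since F(s) = ∑_j s^{w(j)} I_j and G(s) = ∑_j s^{−w(j)} J_j.) -/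
open Filter Topology

lemma detN (α β : ℝ) : (Nmat α β).det = 1 := by
  simp [Nmat, Matrix.det_fin_three]

lemma nmat_entry_smooth (c d : ℝ) (i j : Fin 3) :
    ContDiffOn ℝ 2 (fun s : ℝ => Nmat (s * c) (s⁻¹ * d) i j) {(0:ℝ)}ᶜ := by
  have hinv : ContDiffOn ℝ 2 (fun s : ℝ => s⁻¹ * d) {(0:ℝ)}ᶜ :=
    ContDiffOn.mul (contDiffOn_inv ℝ) contDiffOn_const
  have hmul : ContDiffOn ℝ 2 (fun s : ℝ => s * c) {(0:ℝ)}ᶜ :=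
    (contDiff_id.mul contDiff_const).contDiffOn
  fin_cases i <;> fin_cases j <;>
    simp [Nmat] <;>
    first
      | exact contDiffOn_const
      | exact hinv
      | exact hmul

lemma prod_entry_smooth {n : ℕ} (a b : Fin n → ℝ) (l : List (Fin n)) (i j : Fin 3) :
    ContDiffOn ℝ 2
      (fun s : ℝ => ((l.map fun k => Nmat (s * a k) (s⁻¹ * b k)).prod) i j) {(0:ℝ)}ᶜ := by
  induction l generalizing i j with
  | nil => simpa using contDiffOn_const
  | cons k t ih =>
    have : (fun s : ℝ => (((k :: t).map fun k => Nmat (s * a k) (s⁻¹ * b k)).prod) i j)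
        = fun s : ℝ => ∑ m : Fin 3, Nmat (s * a k) (s⁻¹ * b k) i m *
            ((t.map fun k => Nmat (s * a k) (s⁻¹ * b k)).prod) m j := by
      funext s
      simp [Matrix.mul_apply]
    rw [this]
    exact ContDiffOn.sum fun m _ => (nmat_entry_smooth (a k) (b k) i m).mul (ih m j)

lemma det_prod_one {n : ℕ} (a b : Fin n → ℝ) (s : ℝ) (l : List (Fin n)) :
    ((l.map fun k => Nmat (s * a k) (s⁻¹ * b k)).prod).det = 1 := by
  induction l with
  | nil => simp
  | cons k t ih =>
    rw [List.map_cons, List.prod_cons, Matrix.det_mul, ih, mul_one]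
    exact detN _ _


lemma aux_d1 {f : ℝ → ℝ} (hf : ContDiffOn ℝ 2 f {(0:ℝ)}ᶜ) {s : ℝ} (hs : s ≠ 0) :
    HasDerivAt f (deriv f s) s := by
  have hmem : {(0:ℝ)}ᶜ ∈ 𝓝 s := isOpen_compl_singleton.mem_nhds hs
  exact ((hf.differentiableOn (by norm_num)).differentiableAt hmem).hasDerivAt

lemma aux_d2 {f : ℝ → ℝ} (hf : ContDiffOn ℝ 2 f {(0:ℝ)}ᶜ) {s : ℝ} (hs : s ≠ 0) :
    HasDerivAt (deriv f) (deriv (deriv f) s) s := by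
  have h2 : ContDiffOn ℝ 1 (deriv f) {(0:ℝ)}ᶜ :=
    hf.deriv_of_isOpen isOpen_compl_singleton (by norm_num)
  have hmem : {(0:ℝ)}ᶜ ∈ 𝓝 s := isOpen_compl_singleton.mem_nhds hs
  exact ((h2.differentiableOn (by norm_num)).differentiableAt hmem).hasDerivAt

lemma closed_key (g00 g01 g02 g10 g11 g12 g20 g21 g22 F G : ℝ → ℝ)
    (c00 : ContDiffOn ℝ 2 g00 {(0:ℝ)}ᶜ) (c01 : ContDiffOn ℝ 2 g01 {(0:ℝ)}ᶜ)
    (c02 : ContDiffOn ℝ 2 g02 {(0:ℝ)}ᶜ) (c10 : ContDiffOn ℝ 2 g10 {(0:ℝ)}ᶜ)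
    (c11 : ContDiffOn ℝ 2 g11 {(0:ℝ)}ᶜ) (c12 : ContDiffOn ℝ 2 g12 {(0:ℝ)}ᶜ)
    (c20 : ContDiffOn ℝ 2 g20 {(0:ℝ)}ᶜ) (c21 : ContDiffOn ℝ 2 g21 {(0:ℝ)}ᶜ)
    (c22 : ContDiffOn ℝ 2 g22 {(0:ℝ)}ᶜ)
    (hdet : ∀ s : ℝ, g00 s * g11 s * g22 s - g00 s * g12 s * g21 s
      - g01 s * g10 s * g22 s + g01 s * g12 s * g20 s
      + g02 s * g10 s * g21 s - g02 s * g11 s * g20 s = 1)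
    (hFeq : F = fun s => g00 s + g11 s + g22 s)
    (hGeq : G = fun s => (g11 s * g22 s - g12 s * g21 s) + (g00 s * g22 s - g02 s * g20 s)
      + (g00 s * g11 s - g01 s * g10 s))
    (v00 : g00 1 = 1) (v01 : g01 1 = 0) (v02 : g02 1 = 0)
    (v10 : g10 1 = 0) (v11 : g11 1 = 1) (v12 : g12 1 = 0)
    (v20 : g20 1 = 0) (v21 : g21 1 = 0) (v22 : g22 1 = 1) :
    F 1 = 3 ∧ G 1 = 3 ∧ deriv F 1 = 0 ∧ deriv G 1 = 0 ∧
      deriv (deriv F) 1 = deriv (deriv G) 1 := by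
  have h1 : (1:ℝ) ≠ 0 := one_ne_zero
  have hmem1 : {(0:ℝ)}ᶜ ∈ 𝓝 (1:ℝ) := isOpen_compl_singleton.mem_nhds h1
  -- derivative of det expression at any s ≠ 0 is 0
  have hconstD : ∀ s : ℝ, HasDerivAt (fun t : ℝ => g00 t * g11 t * g22 t
      - g00 t * g12 t * g21 t - g01 t * g10 t * g22 t + g01 t * g12 t * g20 t
      + g02 t * g10 t * g21 t - g02 t * g11 t * g20 t) 0 s := by
    intro s
    have he : (fun t : ℝ => g00 t * g11 t * g22 t - g00 t * g12 t * g21 t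
        - g01 t * g10 t * g22 t + g01 t * g12 t * g20 t + g02 t * g10 t * g21 t
        - g02 t * g11 t * g20 t) = fun _ : ℝ => (1:ℝ) := funext hdet
    rw [he]
    exact hasDerivAt_const _ _
  have hD1zero : ∀ s : ℝ, s ≠ 0 →
      ((deriv g00 s * g11 s + g00 s * deriv g11 s) * g22 s + g00 s * g11 s * deriv g22 s
      - ((deriv g00 s * g12 s + g00 s * deriv g12 s) * g21 s + g00 s * g12 s * deriv g21 s)
      - ((deriv g01 s * g10 s + g01 s * deriv g10 s) * g22 s + g01 s * g10 s * deriv g22 s)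
      + ((deriv g01 s * g12 s + g01 s * deriv g12 s) * g20 s + g01 s * g12 s * deriv g20 s)
      + ((deriv g02 s * g10 s + g02 s * deriv g10 s) * g21 s + g02 s * g10 s * deriv g21 s)
      - ((deriv g02 s * g11 s + g02 s * deriv g11 s) * g20 s + g02 s * g11 s * deriv g20 s)) = 0 := by
    intro s hs
    exact (((((((((aux_d1 c00 hs).mul (aux_d1 c11 hs)).mul (aux_d1 c22 hs)).sub
      (((aux_d1 c00 hs).mul (aux_d1 c12 hs)).mul (aux_d1 c21 hs))).sub
      (((aux_d1 c01 hs).mul (aux_d1 c10 hs)).mul (aux_d1 c22 hs))).add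
      (((aux_d1 c01 hs).mul (aux_d1 c12 hs)).mul (aux_d1 c20 hs))).add
      (((aux_d1 c02 hs).mul (aux_d1 c10 hs)).mul (aux_d1 c21 hs))).sub
      (((aux_d1 c02 hs).mul (aux_d1 c11 hs)).mul (aux_d1 c20 hs)))).unique (hconstD s)

  -- second derivative of det-derivative expression at 1
  have hev : (fun s : ℝ =>
      (deriv g00 s * g11 s + g00 s * deriv g11 s) * g22 s + g00 s * g11 s * deriv g22 s
      - ((deriv g00 s * g12 s + g00 s * deriv g12 s) * g21 s + g00 s * g12 s * deriv g21 s)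
      - ((deriv g01 s * g10 s + g01 s * deriv g10 s) * g22 s + g01 s * g10 s * deriv g22 s)
      + ((deriv g01 s * g12 s + g01 s * deriv g12 s) * g20 s + g01 s * g12 s * deriv g20 s)
      + ((deriv g02 s * g10 s + g02 s * deriv g10 s) * g21 s + g02 s * g10 s * deriv g21 s)
      - ((deriv g02 s * g11 s + g02 s * deriv g11 s) * g20 s + g02 s * g11 s * deriv g20 s))
      =ᶠ[𝓝 (1:ℝ)] fun _ => (0:ℝ) := by
    filter_upwards [hmem1] with s hs
    exact hD1zero s hs
  have hc2 : HasDerivAt (fun s : ℝ =>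
      (deriv g00 s * g11 s + g00 s * deriv g11 s) * g22 s + g00 s * g11 s * deriv g22 s
      - ((deriv g00 s * g12 s + g00 s * deriv g12 s) * g21 s + g00 s * g12 s * deriv g21 s)
      - ((deriv g01 s * g10 s + g01 s * deriv g10 s) * g22 s + g01 s * g10 s * deriv g22 s)
      + ((deriv g01 s * g12 s + g01 s * deriv g12 s) * g20 s + g01 s * g12 s * deriv g20 s)
      + ((deriv g02 s * g10 s + g02 s * deriv g10 s) * g21 s + g02 s * g10 s * deriv g21 s)
      - ((deriv g02 s * g11 s + g02 s * deriv g11 s) * g20 s + g02 s * g11 s * deriv g20 s)) 0 1 :=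
    (Filter.EventuallyEq.hasDerivAt_iff hev).mpr (hasDerivAt_const _ _)
  have hV0 := ((((((((((aux_d2 c00 h1).mul (aux_d1 c11 h1)).add
      ((aux_d1 c00 h1).mul (aux_d2 c11 h1))).mul (aux_d1 c22 h1)).add
      (((aux_d1 c00 h1).mul (aux_d1 c11 h1)).mul (aux_d2 c22 h1))).sub
      (((((aux_d2 c00 h1).mul (aux_d1 c12 h1)).add
      ((aux_d1 c00 h1).mul (aux_d2 c12 h1))).mul (aux_d1 c21 h1)).add
      (((aux_d1 c00 h1).mul (aux_d1 c12 h1)).mul (aux_d2 c21 h1)))).sub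
      (((((aux_d2 c01 h1).mul (aux_d1 c10 h1)).add
      ((aux_d1 c01 h1).mul (aux_d2 c10 h1))).mul (aux_d1 c22 h1)).add
      (((aux_d1 c01 h1).mul (aux_d1 c10 h1)).mul (aux_d2 c22 h1)))).add
      (((((aux_d2 c01 h1).mul (aux_d1 c12 h1)).add
      ((aux_d1 c01 h1).mul (aux_d2 c12 h1))).mul (aux_d1 c20 h1)).add
      (((aux_d1 c01 h1).mul (aux_d1 c12 h1)).mul (aux_d2 c20 h1)))).add
      (((((aux_d2 c02 h1).mul (aux_d1 c10 h1)).add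
      ((aux_d1 c02 h1).mul (aux_d2 c10 h1))).mul (aux_d1 c21 h1)).add
      (((aux_d1 c02 h1).mul (aux_d1 c10 h1)).mul (aux_d2 c21 h1)))).sub
      (((((aux_d2 c02 h1).mul (aux_d1 c11 h1)).add
      ((aux_d1 c02 h1).mul (aux_d2 c11 h1))).mul (aux_d1 c20 h1)).add
      (((aux_d1 c02 h1).mul (aux_d1 c11 h1)).mul (aux_d2 c20 h1)))).unique hc2
  -- F
  have hFder : ∀ s : ℝ, s ≠ 0 →
      HasDerivAt F (deriv g00 s + deriv g11 s + deriv g22 s) s := by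
    intro s hs
    rw [hFeq]
    exact ((aux_d1 c00 hs).add (aux_d1 c11 hs)).add (aux_d1 c22 hs)
  have eqF1 : deriv F 1 = deriv g00 1 + deriv g11 1 + deriv g22 1 := (hFder 1 h1).deriv
  have hFev : deriv F =ᶠ[𝓝 (1:ℝ)]
      fun s => deriv g00 s + deriv g11 s + deriv g22 s := by
    filter_upwards [hmem1] with s hs
    exact (hFder s hs).deriv
  have hFF := hFev.deriv_eq.trans
    ((((aux_d2 c00 h1).add (aux_d2 c11 h1)).add (aux_d2 c22 h1)).deriv)
  -- G
  have hGder : ∀ s : ℝ, s ≠ 0 → HasDerivAt G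
      ((deriv g11 s * g22 s + g11 s * deriv g22 s
        - (deriv g12 s * g21 s + g12 s * deriv g21 s))
      + (deriv g00 s * g22 s + g00 s * deriv g22 s
        - (deriv g02 s * g20 s + g02 s * deriv g20 s))
      + (deriv g00 s * g11 s + g00 s * deriv g11 s
        - (deriv g01 s * g10 s + g01 s * deriv g10 s))) s := by
    intro s hs
    rw [hGeq]
    exact ((((aux_d1 c11 hs).mul (aux_d1 c22 hs)).sub
      ((aux_d1 c12 hs).mul (aux_d1 c21 hs))).add
      (((aux_d1 c00 hs).mul (aux_d1 c22 hs)).sub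
      ((aux_d1 c02 hs).mul (aux_d1 c20 hs)))).add
      (((aux_d1 c00 hs).mul (aux_d1 c11 hs)).sub
      ((aux_d1 c01 hs).mul (aux_d1 c10 hs)))
  have eqG1 := (hGder 1 h1).deriv
  have hGev : deriv G =ᶠ[𝓝 (1:ℝ)] fun s =>
      (deriv g11 s * g22 s + g11 s * deriv g22 s
        - (deriv g12 s * g21 s + g12 s * deriv g21 s))
      + (deriv g00 s * g22 s + g00 s * deriv g22 s
        - (deriv g02 s * g20 s + g02 s * deriv g20 s))
      + (deriv g00 s * g11 s + g00 s * deriv g11 s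
        - (deriv g01 s * g10 s + g01 s * deriv g10 s)) := by
    filter_upwards [hmem1] with s hs
    exact (hGder s hs).deriv
  have hGG := hGev.deriv_eq.trans
    (((((((aux_d2 c11 h1).mul (aux_d1 c22 h1)).add
      ((aux_d1 c11 h1).mul (aux_d2 c22 h1))).sub
      (((aux_d2 c12 h1).mul (aux_d1 c21 h1)).add
      ((aux_d1 c12 h1).mul (aux_d2 c21 h1)))).add
      ((((aux_d2 c00 h1).mul (aux_d1 c22 h1)).add
      ((aux_d1 c00 h1).mul (aux_d2 c22 h1))).sub
      (((aux_d2 c02 h1).mul (aux_d1 c20 h1)).add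
      ((aux_d1 c02 h1).mul (aux_d2 c20 h1))))).add
      ((((aux_d2 c00 h1).mul (aux_d1 c11 h1)).add
      ((aux_d1 c00 h1).mul (aux_d2 c11 h1))).sub
      (((aux_d2 c01 h1).mul (aux_d1 c10 h1)).add
      ((aux_d1 c01 h1).mul (aux_d2 c10 h1))))).deriv)
  -- finish
  have hD1 := hD1zero 1 h1
  beta_reduce at hV0 hFF hGG
  rw [v00, v01, v02, v10, v11, v12, v20, v21, v22] at hD1 hV0 hGG eqG1
  refine ⟨?_, ?_, ?_, ?_, ?_⟩
  · rw [hFeq]; norm_num [v00, v11, v22]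
  · rw [hGeq]; norm_num [v00, v01, v02, v10, v11, v12, v20, v21, v22]
  · rw [eqF1]; linarith [hD1]
  · rw [eqG1]; linarith [hD1]
  · rw [hFF, hGG]; simp only [Pi.mul_apply, Pi.add_apply, v00, v01, v02, v10, v11, v12, v20, v21, v22] at hV0; linear_combination -hV0

/-- Theorem 5.6 (relations for closed polygons): with
`A(s) = N(s a_0, s⁻¹ b_0) ⋯ N(s a_{n-1}, s⁻¹ b_{n-1})`, `F(s) = tr A(s)`,
`G(s) = tr adj A(s)`, if `A(1) = Id` (the polygon is closed) then
`F(1) = G(1) = 3`, `F′(1) = G′(1) = 0`, and `F″(1) = G″(1)`. -/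
theorem stmt_19 (n : ℕ) (hn : 1 ≤ n) (a b : Fin n → ℝ)
    (A : ℝ → Matrix (Fin 3) (Fin 3) ℝ)
    (hA : ∀ s : ℝ,
      A s = (((List.finRange n).map fun i => Nmat (s * a i) (s⁻¹ * b i)).prod))
    (F G : ℝ → ℝ)
    (hF : ∀ s, F s = (A s).trace)
    (hG : ∀ s, G s = (A s).adjugate.trace)
    (hclosed : A 1 = 1) :
    F 1 = 3 ∧ G 1 = 3 ∧ deriv F 1 = 0 ∧ deriv G 1 = 0 ∧
      deriv (deriv F) 1 = deriv (deriv G) 1 := by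
  have hsm : ∀ i j : Fin 3, ContDiffOn ℝ 2 (fun s : ℝ => A s i j) {(0:ℝ)}ᶜ := by
    intro i j
    have he : (fun s : ℝ => A s i j)
        = fun s : ℝ => (((List.finRange n).map fun k => Nmat (s * a k) (s⁻¹ * b k)).prod) i j := by
      funext s; rw [hA s]
    rw [he]
    exact prod_entry_smooth a b _ i j
  have hdetA : ∀ s : ℝ, (A s).det = 1 := by
    intro s; rw [hA s]; exact det_prod_one a b s _
  have hdet : ∀ s : ℝ, A s 0 0 * A s 1 1 * A s 2 2 - A s 0 0 * A s 1 2 * A s 2 1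
      - A s 0 1 * A s 1 0 * A s 2 2 + A s 0 1 * A s 1 2 * A s 2 0
      + A s 0 2 * A s 1 0 * A s 2 1 - A s 0 2 * A s 1 1 * A s 2 0 = 1 := by
    intro s
    rw [← Matrix.det_fin_three]
    exact hdetA s
  have hFeq : F = fun s => A s 0 0 + A s 1 1 + A s 2 2 := by
    funext s; rw [hF s, Matrix.trace_fin_three]
  have hGeq : G = fun s => (A s 1 1 * A s 2 2 - A s 1 2 * A s 2 1)
      + (A s 0 0 * A s 2 2 - A s 0 2 * A s 2 0)
      + (A s 0 0 * A s 1 1 - A s 0 1 * A s 1 0) := by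
    funext s
    rw [hG s, Matrix.adjugate_fin_three, Matrix.trace_fin_three]
    simp
  exact closed_key (fun s => A s 0 0) (fun s => A s 0 1) (fun s => A s 0 2)
    (fun s => A s 1 0) (fun s => A s 1 1) (fun s => A s 1 2)
    (fun s => A s 2 0) (fun s => A s 2 1) (fun s => A s 2 2) F G
    (hsm 0 0) (hsm 0 1) (hsm 0 2) (hsm 1 0) (hsm 1 1) (hsm 1 2)
    (hsm 2 0) (hsm 2 1) (hsm 2 2) hdet hFeq hGeq
    (by simp [hclosed, Matrix.one_apply]) (by simp [hclosed, Matrix.one_apply])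
    (by simp [hclosed, Matrix.one_apply]) (by simp [hclosed, Matrix.one_apply])
    (by simp [hclosed, Matrix.one_apply]) (by simp [hclosed, Matrix.one_apply])
    (by simp [hclosed, Matrix.one_apply]) (by simp [hclosed, Matrix.one_apply])
    (by simp [hclosed, Matrix.one_apply])
end
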